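/- arXiv:math/0304368 — 4 statements merged into one kernel-verified Lean document; each statement's English description precedes it below -/
import Mathlib

section
/- (Heine identity / Andréief identity) For functions φ_1,...,φ_n and ψ_1,...,ψ_n on a measure space (Ω, μ) such that all products φ_i ψ_j are integrable, (1/n!) ∫_{Ω^n} det(φ_i(x_j))_{1≤i,j≤n} · det(ψ_i(x_j))_{1≤i,j≤n} dμ(x_1)...dμ(x_n) = det( ∫_Ω φ_i(x) ψ_j(x) dμ(x) )_{1≤i,j≤n}. -/
open MeasureTheory Equiv

theorem sum_perm_sq (n : ℕ) (A : Matrix (Fin n) (Fin n) ℝ) :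
    ∑ σ : Perm (Fin n), ∑ τ : Perm (Fin n),
      ((Perm.sign σ : ℤ) : ℝ) * ((Perm.sign τ : ℤ) : ℝ) * ∏ j, A (σ j) (τ j)
    = (n.factorial : ℝ) * A.det := by
  have hdet : A.det = ∑ π : Perm (Fin n), ((Perm.sign π : ℤ) : ℝ) * ∏ k, A k (π k) := by
    rw [← Matrix.det_transpose, Matrix.det_apply']
    rfl
  have h1 : ∀ σ : Perm (Fin n),
      ∑ τ : Perm (Fin n), ((Perm.sign σ : ℤ) : ℝ) * ((Perm.sign τ : ℤ) : ℝ) * ∏ j, A (σ j) (τ j)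
      = A.det := by
    intro σ
    rw [hdet]
    refine Fintype.sum_equiv (Equiv.mulRight σ).symm _ _ (fun τ => ?_)
    have hprod : ∏ j, A (σ j) (τ j) = ∏ x, A x (τ (σ⁻¹ x)) := by
      rw [← Equiv.prod_comp σ (fun k => A k (τ (σ⁻¹ k)))]
      simp
    simp only [Equiv.mulRight_symm, Equiv.coe_mulRight, Perm.sign_mul, Perm.mul_apply,
      (fun x => σ.symm_apply_apply x : ∀ x, σ⁻¹ (σ x) = x), map_inv, hprod]
    rcases Int.units_eq_one_or (Perm.sign σ) with h | h <;> simp [h]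
  calc ∑ σ : Perm (Fin n), ∑ τ : Perm (Fin n), _ = ∑ _σ : Perm (Fin n), A.det :=
        Finset.sum_congr rfl fun σ _ => h1 σ
    _ = (n.factorial : ℝ) * A.det := by
        rw [Finset.sum_const, Finset.card_univ, Fintype.card_perm, Fintype.card_fin, nsmul_eq_mul]

/-- The Heine (Andréief) identity: for functions `φ_1, …, φ_n` and `ψ_1, …, ψ_n`
with all products `φ_i ψ_j` integrable,
`(1/n!) ∫ det(φ_i(x_j)) det(ψ_i(x_j)) dμ^n(x) = det(∫ φ_i ψ_j dμ)`. -/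
theorem heine_identity {Ω : Type*} [MeasurableSpace Ω] (μ : Measure Ω) [SigmaFinite μ]
    (n : ℕ) (φ ψ : Fin n → Ω → ℝ)
    (hφ : ∀ i, Measurable (φ i)) (hψ : ∀ i, Measurable (ψ i))
    (hint : ∀ i j, Integrable (fun x => φ i x * ψ j x) μ) :
    (1 / (Nat.factorial n : ℝ)) *
        (∫ x : Fin n → Ω,
          (Matrix.det fun i j => φ i (x j)) * (Matrix.det fun i j => ψ i (x j))
          ∂Measure.pi fun _ => μ) =
      Matrix.det fun i j => ∫ x, φ i x * ψ j x ∂μ := by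
  letI : MeasureSpace Ω := ⟨μ⟩
  haveI : SigmaFinite (volume : Measure Ω) := by assumption
  set F : Perm (Fin n) × Perm (Fin n) → (Fin n → Ω) → ℝ := fun p x =>
    ((Perm.sign p.1 : ℤ) : ℝ) * ((Perm.sign p.2 : ℤ) : ℝ) *
      ∏ j, (φ (p.1 j) (x j) * ψ (p.2 j) (x j)) with hFdef
  have hF : ∀ p, Integrable (F p) (Measure.pi fun _ => μ) := by
    intro p
    apply Integrable.const_mul
    exact Integrable.fintype_prod (f := fun j x => φ (p.1 j) x * ψ (p.2 j) x)
      (fun j => hint _ _)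
  have hpt : ∀ x : Fin n → Ω,
      (Matrix.det fun i j => φ i (x j)) * (Matrix.det fun i j => ψ i (x j))
      = ∑ p : Perm (Fin n) × Perm (Fin n), F p x := by
    intro x
    change Matrix.det (Matrix.of fun i j => φ i (x j)) * Matrix.det (Matrix.of fun i j => ψ i (x j)) = _
    rw [Matrix.det_apply', Matrix.det_apply', Finset.sum_mul_sum, Fintype.sum_prod_type]
    refine Finset.sum_congr rfl fun σ _ => Finset.sum_congr rfl fun τ _ => ?_
    simp only [hFdef, Finset.prod_mul_distrib, Matrix.of_apply]
    ring
  have hIF : ∀ p : Perm (Fin n) × Perm (Fin n),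
      (∫ x : Fin n → Ω, F p x ∂(Measure.pi fun _ => μ))
      = ((Perm.sign p.1 : ℤ) : ℝ) * ((Perm.sign p.2 : ℤ) : ℝ) *
          ∏ j, ∫ x, φ (p.1 j) x * ψ (p.2 j) x ∂μ := by
    intro p
    rw [hFdef]
    rw [integral_const_mul]
    have := integral_fintype_prod_eq_prod (ι := Fin n)
      (f := fun j (x : Ω) => φ (p.1 j) x * ψ (p.2 j) x) (μ := fun _ => μ)
    exact congrArg _ this
  have key : (∫ x : Fin n → Ω,
      (Matrix.det fun i j => φ i (x j)) * (Matrix.det fun i j => ψ i (x j))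
      ∂Measure.pi fun _ => μ)
      = (n.factorial : ℝ) * Matrix.det (fun i j => ∫ x, φ i x * ψ j x ∂μ) := by
    rw [integral_congr_ae (Filter.Eventually.of_forall hpt),
      integral_finset_sum Finset.univ (fun p _ => hF p)]
    calc ∑ p : Perm (Fin n) × Perm (Fin n), ∫ x : Fin n → Ω, F p x ∂(Measure.pi fun _ => μ)
        = ∑ p : Perm (Fin n) × Perm (Fin n),
            ((Perm.sign p.1 : ℤ) : ℝ) * ((Perm.sign p.2 : ℤ) : ℝ) *
              ∏ j, ∫ x, φ (p.1 j) x * ψ (p.2 j) x ∂μ :=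
          Finset.sum_congr rfl fun p _ => hIF p
      _ = ∑ σ : Perm (Fin n), ∑ τ : Perm (Fin n),
            ((Perm.sign σ : ℤ) : ℝ) * ((Perm.sign τ : ℤ) : ℝ) *
              ∏ j, ∫ x, φ (σ j) x * ψ (τ j) x ∂μ := by rw [Fintype.sum_prod_type]
      _ = (n.factorial : ℝ) * Matrix.det (fun i j => ∫ x, φ i x * ψ j x ∂μ) :=
          sum_perm_sq n (fun i j => ∫ x, φ i x * ψ j x ∂μ)
  rw [key]
  have hfac : (n.factorial : ℝ) ≠ 0 := Nat.cast_ne_zero.mpr (Nat.factorial_ne_zero n)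
  field_simp
end

section
/- Under the Robinson–Schensted–Knuth correspondence applied to an M×M matrix (w(i,j)) of nonnegative integers, the resulting common shape λ of the pair of semistandard tableaux has first row λ_1 equal to the maximum over up/right paths π from (1,1) to (M,M) of Σ_{(i,j)∈π} w(i,j). -/
/-- RSK row insertion: insert `x` into a weakly increasing row, returning the new row
and the bumped entry (if any).  The entry bumped is the leftmost one that is `> x`;
if every entry is `≤ x`, then `x` is appended at the end of the row. -/
def rowInsert (x : ℕ) : List ℕ → List ℕ × Option ℕ
  | [] => ([x], none)
  | y :: ys =>
    if x < y then (x :: ys, some y)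
    else
      let p := rowInsert x ys
      (y :: p.1, p.2)

/-- RSK insertion of `x` into a semistandard tableau, given as its list of rows. -/
def tableauInsert (x : ℕ) : List (List ℕ) → List (List ℕ)
  | [] => [[x]]
  | r :: rs =>
    match rowInsert x r with
    | (r', none) => r' :: rs
    | (r', some y) => r' :: tableauInsert y rs

/-- The insertion (P-) tableau of the RSK correspondence applied to a word. -/
def rskTableau (w : List ℕ) : List (List ℕ) :=
  w.foldl (fun t x => tableauInsert x t) []

/-- The word of the matrix `(w(i,j))_{1 ≤ i,j ≤ M}` (the bottom row of the associated
biword, in lexicographic order): for `i = 1, …, M` and `j = 1, …, M`, the letter `j`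
is repeated `w(i,j)` times. -/
def matrixWord (M : ℕ) (w : ℕ × ℕ → ℕ) : List ℕ :=
  (List.range M).flatMap fun i =>
    (List.range M).flatMap fun j => List.replicate (w (i + 1, j + 1)) (j + 1)

/-- `p` is an up/right lattice path from `(1,1)` to `(M,N)`. -/
def IsUpRightPath (M N : ℕ) (p : List (ℕ × ℕ)) : Prop :=
  p.head? = some (1, 1) ∧ p.getLast? = some (M, N) ∧
    p.Chain' fun u v => v = (u.1 + 1, u.2) ∨ v = (u.1, u.2 + 1)

namespace RSK
open List


def step (r : List ℕ) (x : ℕ) : List ℕ := (rowInsert x r).1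

def firstRow (w : List ℕ) : List ℕ := w.foldl step []

lemma tableauInsert_headD (x : ℕ) (t : List (List ℕ)) :
    (tableauInsert x t).headD [] = step (t.headD []) x := by
  cases t with
  | nil => simp [tableauInsert, step, rowInsert]
  | cons r rs =>
    rcases h : rowInsert x r with ⟨r', o⟩
    cases o <;> simp [tableauInsert, h, step]

lemma headD_rskTableau (w : List ℕ) : (rskTableau w).headD [] = firstRow w := by
  suffices h : ∀ t : List (List ℕ),
      (w.foldl (fun t x => tableauInsert x t) t).headD [] = w.foldl step (t.headD []) by
    exact h []
  induction w with
  | nil => intro t; rfl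
  | cons x xs ih =>
    intro t
    simp only [List.foldl_cons, ih, tableauInsert_headD]



lemma mem_step {a x : ℕ} : ∀ {r : List ℕ}, a ∈ step r x → a = x ∨ a ∈ r := by
  intro r
  induction r with
  | nil => simp [step, rowInsert]
  | cons y ys ih =>
    by_cases h : x < y <;> simp [step, rowInsert, h] at *
    · tauto
    · rintro (rfl | hm)
      · tauto
      · rcases ih hm with h' | h' <;> tauto

lemma step_sorted {r : List ℕ} (x : ℕ) (h : r.Pairwise (· ≤ ·)) :
    (step r x).Pairwise (· ≤ ·) := by
  induction r with
  | nil => simp [step, rowInsert]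
  | cons y ys ih =>
    rw [List.pairwise_cons] at h
    by_cases hxy : x < y <;> simp only [step, rowInsert, hxy, if_pos, if_neg, ite_true, ite_false]
    · exact List.pairwise_cons.2 ⟨fun b hb => le_trans (le_of_lt hxy) (h.1 b hb), h.2⟩
    · refine List.pairwise_cons.2 ⟨fun b hb => ?_, ih h.2⟩
      rcases mem_step hb with rfl | hb'
      · omega
      · exact h.1 b hb'

lemma step_get_le {r : List ℕ} {x : ℕ} {k : ℕ} {v : ℕ} (h : r[k]? = some v) :
    ∃ v', (step r x)[k]? = some v' ∧ v' ≤ v := by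
  induction r generalizing k with
  | nil => simp at h
  | cons y ys ih =>
    by_cases hxy : x < y <;>
      simp only [step, rowInsert, hxy, ite_true, ite_false]
    · cases k with
      | zero => simp at h ⊢; omega
      | succ k => simp at h ⊢; exact ⟨v, h, le_rfl⟩
    · cases k with
      | zero => simp at h ⊢; omega
      | succ k =>
        simp only [List.getElem?_cons_succ] at h ⊢
        exact ih h

lemma step_get_zero {r : List ℕ} {x : ℕ} :
    ∃ v', (step r x)[0]? = some v' ∧ v' ≤ x := by
  cases r with
  | nil => simp [step, rowInsert]
  | cons y ys =>
    by_cases hxy : x < y <;> simp [step, rowInsert, hxy]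
    omega

lemma step_get_succ {r : List ℕ} {x : ℕ} {k : ℕ} {v : ℕ} (hs : r.Pairwise (· ≤ ·))
    (h : r[k]? = some v) (hvx : v ≤ x) :
    ∃ v', (step r x)[k + 1]? = some v' ∧ v' ≤ x := by
  induction r generalizing k with
  | nil => simp at h
  | cons y ys ih =>
    rw [List.pairwise_cons] at hs
    have hyx : y ≤ x := by
      cases k with
      | zero => simp at h; omega
      | succ k =>
        simp only [List.getElem?_cons_succ] at h
        have : v ∈ ys := by
          have := List.getElem?_eq_some_iff.mp h
          exact this.choose_spec ▸ List.getElem_mem _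
        exact le_trans (hs.1 v this) hvx
    have hxy : ¬ x < y := by omega
    simp only [step, rowInsert, hxy, ite_false, List.getElem?_cons_succ]
    cases k with
    | zero => exact step_get_zero
    | succ k =>
      simp only [List.getElem?_cons_succ] at h
      exact ih hs.2 h

lemma step_get_cases {r : List ℕ} {x : ℕ} {k : ℕ} {v' : ℕ}
    (h : (step r x)[k]? = some v') :
    r[k]? = some v' ∨ (v' = x ∧ (k = 0 ∨ ∃ u, u ≤ x ∧ r[k - 1]? = some u ∧ 1 ≤ k)) := by
  induction r generalizing k with
  | nil =>
    simp only [step, rowInsert] at h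
    cases k with
    | zero => simp at h; right; exact ⟨h.symm, Or.inl rfl⟩
    | succ k => simp at h
  | cons y ys ih =>
    by_cases hxy : x < y <;>
      simp only [step, rowInsert, hxy, ite_true, ite_false] at h
    · cases k with
      | zero => simp at h; right; exact ⟨h.symm, Or.inl rfl⟩
      | succ k => simp at h ⊢; left; exact h
    · cases k with
      | zero => simp at h ⊢; left; omega
      | succ k =>
        simp only [List.getElem?_cons_succ] at h ⊢
        rcases ih h with h' | ⟨rfl, h'⟩
        · left; exact h'
        · right
          refine ⟨rfl, Or.inr ?_⟩
          rcases h' with rfl | ⟨u, hu, hget, hk1⟩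
          · exact ⟨y, by omega, by simp, by omega⟩
          · cases k with
            | zero => omega
            | succ k =>
              simp only [Nat.add_sub_cancel] at *
              refine ⟨u, hu, ?_, by omega⟩
              cases k with
              | zero => simpa using hget
              | succ m => simpa using hget



lemma firstRow_concat (w : List ℕ) (x : ℕ) :
    firstRow (w ++ [x]) = step (firstRow w) x := List.foldl_concat _ _ _ _

lemma firstRow_sorted (w : List ℕ) : (firstRow w).Pairwise (· ≤ ·) := by
  induction w using List.reverseRecOn with
  | nil => simp [firstRow]
  | append_singleton w x ih => rw [firstRow_concat]; exact step_sorted x ih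

/-- Lemma A: every position of the first row is witnessed by an increasing sublist. -/
lemma exists_sorted_sublist (w : List ℕ) :
    ∀ k v, (firstRow w)[k]? = some v →
      ∃ s, s <+ w ∧ s.Pairwise (· ≤ ·) ∧ s.length = k + 1 ∧ ∀ a ∈ s, a ≤ v := by
  induction w using List.reverseRecOn with
  | nil => intro k v h; simp [firstRow] at h
  | append_singleton w x ih =>
    intro k v h
    rw [firstRow_concat] at h
    rcases step_get_cases h with h' | ⟨rfl, h'⟩
    · obtain ⟨s, hs, hsort, hlen, hbd⟩ := ih k v h'
      exact ⟨s, hs.trans (List.sublist_append_left _ _), hsort, hlen, hbd⟩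
    · rcases h' with rfl | ⟨u, hux, hget, hk⟩
      · exact ⟨[v], List.sublist_append_right _ _, by simp, by simp, by simp⟩
      · obtain ⟨s, hs, hsort, hlen, hbd⟩ := ih (k - 1) u hget
        refine ⟨s ++ [v], hs.append (List.Sublist.refl _), ?_, ?_, ?_⟩
        · rw [List.pairwise_append]
          exact ⟨hsort, by simp, fun a ha b hb => by
            simp at hb; subst hb; exact le_trans (hbd a ha) hux⟩
        · simp [hlen]; omega
        · intro a ha
          rcases List.mem_append.1 ha with ha | ha
          · exact le_trans (hbd a ha) hux
          · simp at ha; omega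

/-- Lemma B: every increasing sublist is dominated by the first row. -/
lemma sorted_sublist_le (w : List ℕ) :
    ∀ s, s <+ w → s.Pairwise (· ≤ ·) → ∀ last, s.getLast? = some last →
      ∃ v, (firstRow w)[s.length - 1]? = some v ∧ v ≤ last := by
  induction w using List.reverseRecOn with
  | nil =>
    intro s hs _ last hlast
    rw [List.sublist_nil.mp hs] at hlast; simp at hlast
  | append_singleton w x ih =>
    intro s hs hsort last hlast
    rw [firstRow_concat]
    rcases List.sublist_append_iff.mp hs with ⟨s₁, s₂, rfl, h₁, h₂⟩
    rcases List.sublist_singleton.mp h₂ with rfl | rfl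
    · rw [List.append_nil] at *
      obtain ⟨v, hv, hvle⟩ := ih s₁ h₁ hsort last hlast
      obtain ⟨v', hv', hle'⟩ := step_get_le hv
      exact ⟨v', hv', le_trans hle' hvle⟩
    · rw [List.getLast?_concat] at hlast
      injection hlast with hlast; subst hlast
      rcases eq_or_ne s₁ [] with rfl | hne
      · simpa using step_get_zero
      · have hcross : ∀ a ∈ s₁, a ≤ x := by
          rw [List.pairwise_append] at hsort
          intro a ha; exact hsort.2.2 a ha x (by simp)
        have hl' : s₁.getLast? = some (s₁.getLast hne) :=
          List.getLast?_eq_getLast_of_ne_nil hne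
        have hsort₁ : s₁.Pairwise (· ≤ ·) :=
          hsort.sublist (List.sublist_append_left _ _)
        obtain ⟨v, hv, hvle⟩ := ih s₁ h₁ hsort₁ _ hl'
        have hvx : v ≤ x := le_trans hvle (hcross _ (List.getLast_mem hne))
        obtain ⟨v', hv', hle'⟩ := step_get_succ (firstRow_sorted w) hv hvx
        have : s₁.length - 1 + 1 = s₁.length := by
          have := List.length_pos_iff.mpr hne; omega
        rw [this] at hv'
        refine ⟨v', ?_, hle'⟩
        simpa using hv'


/-- There is a sorted sublist of length equal to the first row. -/
lemma exists_sorted_sublist_length (w : List ℕ) :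
    ∃ s, s <+ w ∧ s.Pairwise (· ≤ ·) ∧ s.length = (firstRow w).length := by
  rcases eq_or_ne (firstRow w) [] with h | h
  · exact ⟨[], List.nil_sublist _, by simp, by simp [h]⟩
  · have hpos : 0 < (firstRow w).length := List.length_pos_iff.mpr h
    have hget : (firstRow w)[(firstRow w).length - 1]? =
        some ((firstRow w)[(firstRow w).length - 1]'(by omega)) :=
      List.getElem?_eq_getElem (by omega)
    obtain ⟨s, hs, hsort, hlen, _⟩ := exists_sorted_sublist w _ _ hget
    exact ⟨s, hs, hsort, by omega⟩

/-- Every sorted sublist has length at most the first row's length. -/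
lemma sorted_sublist_length_le (w : List ℕ) (s : List ℕ) (hs : s <+ w)
    (hsort : s.Pairwise (· ≤ ·)) : s.length ≤ (firstRow w).length := by
  rcases eq_or_ne s [] with rfl | h
  · simp
  · obtain ⟨v, hv, _⟩ := sorted_sublist_le w s hs hsort _
      (List.getLast?_eq_getLast_of_ne_nil h)
    have := List.getElem?_eq_some_iff.mp hv
    have := this.choose
    have hpos : 0 < s.length := List.length_pos_iff.mpr h
    omega



/-- Generic: flatMap preserves pairwise. -/
lemma pairwise_flatMap {α β : Type} {R : α → α → Prop} {S : β → β → Prop}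
    {l : List α} {f : α → List β} (hl : l.Pairwise R)
    (hf : ∀ a ∈ l, (f a).Pairwise S)
    (hRS : ∀ a b, R a b → ∀ x ∈ f a, ∀ y ∈ f b, S x y) :
    (l.flatMap f).Pairwise S := by
  induction l with
  | nil => simp
  | cons a l ih =>
    rw [List.pairwise_cons] at hl
    rw [List.flatMap_cons, List.pairwise_append]
    refine ⟨hf a (by simp), ih hl.2 (fun b hb => hf b (by simp [hb])), ?_⟩
    intro x hx y hy
    rcases List.mem_flatMap.1 hy with ⟨b, hb, hyb⟩
    exact hRS a b (hl.1 b hb) x hx y hyb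

/-- Generic: a pairwise list included in another pairwise list (asymmetric relation)
is a sublist. -/
lemma sublist_of_pairwise_subset {α : Type} {R : α → α → Prop}
    (hasym : ∀ a b, R a b → ¬ R b a) :
    ∀ {l₁ l₂ : List α}, l₁.Pairwise R → l₂.Pairwise R → l₁ ⊆ l₂ → l₁ <+ l₂ := by
  intro l₁ l₂ h₁ h₂ hsub
  induction l₂ generalizing l₁ with
  | nil => rw [List.subset_nil.mp hsub]
  | cons b l₂ ih =>
    cases l₁ with
    | nil => exact List.nil_sublist _
    | cons a l₁ =>
      rw [List.pairwise_cons] at h₁ h₂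
      by_cases hab : a = b
      · subst hab
        refine List.Sublist.cons₂ a (ih h₁.2 h₂.2 ?_)
        intro x hx
        rcases List.mem_cons.1 (hsub (List.mem_cons_of_mem a hx)) with rfl | hx2
        · exact absurd (h₁.1 x hx) (fun h => hasym _ _ h (h₁.1 x hx))
        · exact hx2
      · refine List.Sublist.cons b (ih (List.pairwise_cons.2 h₁) h₂.2 ?_)
        intro x hx
        rcases List.mem_cons.1 (hsub hx) with rfl | hx2
        · -- x = b ∈ a :: l₁, a ≠ b so b ∈ l₁, so R a b; also R b a from h₂? no:
          rcases List.mem_cons.1 hx with rfl | hx1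
          · exact absurd rfl hab
          · -- b ∈ l₁, so R a b (h₁.1). Also a ∈ b :: l₂, a ≠ b so a ∈ l₂, so R b a.
            have hba : R x a := by
              have ha : a ∈ l₂ := by
                rcases List.mem_cons.1 (hsub (List.mem_cons_self (a := a) (l := l₁))) with rfl | h
                · exact absurd rfl hab
                · exact h
              exact h₂.1 a ha
            exact absurd hba (hasym _ _ (h₁.1 x hx1))
        · exact hx2

lemma Sublist.flatMap' {α β : Type} {l₁ l₂ : List α} (f : α → List β)
    (h : l₁ <+ l₂) : l₁.flatMap f <+ l₂.flatMap f := by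
  induction h with
  | slnil => simp
  | cons a h ih =>
    rw [List.flatMap_cons]
    exact ih.trans (List.sublist_append_right _ _)
  | cons_cons a h ih =>
    rw [List.flatMap_cons, List.flatMap_cons]
    exact List.Sublist.append (List.Sublist.refl _) ih



def allCells (M : ℕ) : List (ℕ × ℕ) :=
  (List.range M).flatMap fun i => (List.range M).map fun j => (i + 1, j + 1)

def tagged (M : ℕ) (w : ℕ × ℕ → ℕ) : List (ℕ × ℕ) :=
  (allCells M).flatMap fun c => List.replicate (w c) c

def lexLT (u v : ℕ × ℕ) : Prop := u.1 < v.1 ∨ (u.1 = v.1 ∧ u.2 < v.2)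
def lexLE (u v : ℕ × ℕ) : Prop := u.1 < v.1 ∨ (u.1 = v.1 ∧ u.2 ≤ v.2)
def cLE (u v : ℕ × ℕ) : Prop := u.1 ≤ v.1 ∧ u.2 ≤ v.2
def cLT (u v : ℕ × ℕ) : Prop := cLE u v ∧ u ≠ v

lemma mem_allCells {M : ℕ} {c : ℕ × ℕ} :
    c ∈ allCells M ↔ 1 ≤ c.1 ∧ c.1 ≤ M ∧ 1 ≤ c.2 ∧ c.2 ≤ M := by
  rcases c with ⟨a, b⟩
  simp only [allCells, List.mem_flatMap, List.mem_map, List.mem_range, Prod.mk.injEq]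
  constructor
  · rintro ⟨i, hi, j, hj, rfl, rfl⟩; omega
  · rintro ⟨h1, h2, h3, h4⟩; exact ⟨a - 1, by omega, b - 1, by omega, by omega, by omega⟩

lemma matrixWord_eq (M : ℕ) (w : ℕ × ℕ → ℕ) :
    matrixWord M w = (allCells M).flatMap fun c => List.replicate (w c) c.2 := by
  simp [matrixWord, allCells, List.flatMap_assoc, List.flatMap_map]

lemma tagged_map_snd (M : ℕ) (w : ℕ × ℕ → ℕ) :
    (tagged M w).map Prod.snd = matrixWord M w := by
  rw [matrixWord_eq, tagged, List.map_flatMap]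
  simp [Function.comp]

lemma allCells_pairwise (M : ℕ) : (allCells M).Pairwise lexLT := by
  refine pairwise_flatMap (List.pairwise_lt_range (n := M)) (fun i _ => ?_) ?_
  · rw [List.pairwise_map]
    exact (List.pairwise_lt_range (n := M)).imp (fun {a b} h => Or.inr ⟨rfl, by omega⟩)
  · rintro i i' hii' x hx y hy
    simp only [List.mem_map, List.mem_range] at hx hy
    obtain ⟨j, _, rfl⟩ := hx
    obtain ⟨j', _, rfl⟩ := hy
    left; omega

lemma allCells_nodup (M : ℕ) : (allCells M).Nodup :=
  (allCells_pairwise M).imp (fun {a b} h => by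
    rintro rfl
    rcases h with h | h <;> omega)

lemma tagged_pairwise (M : ℕ) (w : ℕ × ℕ → ℕ) : (tagged M w).Pairwise lexLE := by
  refine pairwise_flatMap (allCells_pairwise M) (fun c _ => ?_) ?_
  · rw [List.pairwise_replicate]
    right; right; exact ⟨rfl, le_rfl⟩
  · intro a b hab x hx y hy
    rw [List.eq_of_mem_replicate hx, List.eq_of_mem_replicate hy]
    rcases hab with h | h
    · left; exact h
    · right; exact ⟨h.1, le_of_lt h.2⟩

lemma mem_tagged {M : ℕ} {w : ℕ × ℕ → ℕ} {c : ℕ × ℕ} (h : c ∈ tagged M w) :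
    c ∈ allCells M := by
  rcases List.mem_flatMap.1 h with ⟨c', hc', hrep⟩
  rwa [List.eq_of_mem_replicate hrep]

lemma count_tagged (M : ℕ) (w : ℕ × ℕ → ℕ) (c : ℕ × ℕ) :
    (tagged M w).count c ≤ w c := by
  have key : ∀ l : List (ℕ × ℕ), l.Nodup →
      (l.flatMap fun c' => List.replicate (w c') c').count c ≤ w c := by
    intro l hl
    induction l with
    | nil => simp
    | cons a l ih =>
      rw [List.nodup_cons] at hl
      rw [List.flatMap_cons, List.count_append]
      by_cases hca : a = c
      · subst hca
        have h0 : (l.flatMap fun c' => List.replicate (w c') c').count a = 0 := by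
          rw [List.count_eq_zero]
          intro hmem
          rcases List.mem_flatMap.1 hmem with ⟨c', hc', hrep⟩
          exact hl.1 (List.eq_of_mem_replicate hrep ▸ hc')
        rw [h0]
        simp [List.count_replicate]
      · have : (List.replicate (w a) a).count c = 0 := by
          rw [List.count_eq_zero]
          intro hmem
          exact hca (List.eq_of_mem_replicate hmem).symm
        rw [this]
        simpa using ih hl.2
  exact key _ (allCells_nodup M)




def stepR (u v : ℕ × ℕ) : Prop := v = (u.1 + 1, u.2) ∨ v = (u.1, u.2 + 1)
def seg (u v : ℕ × ℕ) : List (ℕ × ℕ) :=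
  ((List.range' (u.1 + 1) (v.1 - u.1)).map fun i => (i, u.2)) ++
  ((List.range' (u.2 + 1) (v.2 - u.2)).map fun j => (v.1, j))

def walk : ℕ × ℕ → List (ℕ × ℕ) → List (ℕ × ℕ)
  | _, [] => []
  | u, v :: l => seg u v ++ walk v l

lemma chain'_range' (s n : ℕ) : List.Chain' (fun a b => b = a + 1) (List.range' s n) := by
  induction n generalizing s with
  | zero => simp [List.Chain']
  | succ n ih =>
    rw [List.range'_succ]
    rw [List.Chain', List.isChain_cons]
    refine ⟨?_, ih (s + 1)⟩
    intro y hy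
    cases n with
    | zero => simp at hy
    | succ n => rw [List.range'_succ] at hy; simp at hy; omega

lemma getLast?_cons_of_ne_nil {α : Type} (a : α) {l : List α} (h : l ≠ []) :
    (a :: l).getLast? = l.getLast? := by
  cases l with
  | nil => exact absurd rfl h
  | cons b l => rw [List.getLast?_cons_cons]

lemma seg_spec {u v : ℕ × ℕ} (h : cLE u v) :
    List.Chain' stepR (u :: seg u v) ∧ (u :: seg u v).getLast? = some v := by
  obtain ⟨u1, u2⟩ := u
  obtain ⟨v1, v2⟩ := v
  obtain ⟨h1, h2⟩ := h
  simp only at h1 h2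
  obtain ⟨k, rfl⟩ : ∃ k, v1 = u1 + k := ⟨v1 - u1, by omega⟩
  obtain ⟨m, rfl⟩ : ∃ m, v2 = u2 + m := ⟨v2 - u2, by omega⟩
  have hseg : seg (u1, u2) (u1 + k, u2 + m) =
      ((List.range' (u1 + 1) k).map fun i => (i, u2)) ++
      ((List.range' (u2 + 1) m).map fun j => (u1 + k, j)) := by
    simp [seg]
  have hH : (u1, u2) :: (List.range' (u1 + 1) k).map (fun i => (i, u2)) =
      (List.range' u1 (k + 1)).map fun i => (i, u2) := by
    rw [List.range'_succ]; rfl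
  -- chain of the combined path
  constructor
  · rw [hseg, ← List.cons_append, hH]
    apply List.IsChain.append
    · rw [List.isChain_map]
      exact (chain'_range' u1 (k + 1)).imp (fun {a b} hab => Or.inl (by simp [hab]))
    · rw [List.isChain_map]
      exact (chain'_range' (u2 + 1) m).imp (fun {a b} hab => Or.inr (by simp [hab]))
    · intro x hx y hy
      -- x is the last of the horizontal part, y the head of vertical part
      have hx' : x = (u1 + k, u2) := by
        rw [List.range'_concat] at hx
        simp only [List.map_append, List.map_cons, List.map_nil, List.getLast?_concat,
          Option.mem_def, Option.some.injEq, one_mul] at hx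
        exact hx.symm
      subst hx'
      cases m with
      | zero => simp at hy
      | succ m =>
        rw [List.range'_succ] at hy
        simp at hy
        right
        simp [hy]
  · rw [hseg, ← List.cons_append, hH]
    cases m with
    | zero =>
      simp only [List.range'_zero, List.map_nil, List.append_nil]
      rw [List.range'_concat]
      simp only [List.map_append, List.map_cons, List.map_nil, List.getLast?_concat, one_mul]
      simp
    | succ m =>
      rw [List.getLast?_append_of_ne_nil _ (by rw [List.range'_succ]; simp)]
      rw [List.range'_concat]
      simp only [List.map_append, List.map_cons, List.map_nil, List.getLast?_concat, one_mul]
      simp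
      omega

lemma walk_spec : ∀ (l : List (ℕ × ℕ)) (u : ℕ × ℕ), List.Chain' cLE (u :: l) →
    List.Chain' stepR (u :: walk u l) ∧
      (u :: walk u l).getLast? = (u :: l).getLast? := by
  intro l
  induction l with
  | nil => intro u _; exact ⟨by simp [walk, List.Chain'], rfl⟩
  | cons v rest ih =>
    intro u hchain
    rw [List.Chain', List.isChain_cons] at hchain
    have huv : cLE u v := hchain.1 v rfl
    obtain ⟨hwchain, hwlast⟩ := ih v hchain.2
    have hw : u :: walk u (v :: rest) = (u :: seg u v) ++ walk v rest := by
      simp [walk]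
    obtain ⟨hsc, hsl⟩ := seg_spec huv
    rw [List.Chain', List.isChain_cons] at hwchain
    constructor
    · rw [hw]
      apply List.IsChain.append hsc hwchain.2
      intro x hx y hy
      rw [hsl] at hx
      simp at hx
      subst hx
      exact hwchain.1 y hy
    · rw [hw]
      rcases eq_or_ne (walk v rest) [] with hnil | hnil
      · rw [hnil, List.append_nil, hsl]
        rw [hnil] at hwlast
        simp only [List.getLast?_singleton] at hwlast
        rw [getLast?_cons_of_ne_nil u (by simp), ← hwlast]
      · rw [List.getLast?_append_of_ne_nil _ hnil]
        rw [getLast?_cons_of_ne_nil v hnil] at hwlast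
        rw [hwlast, getLast?_cons_of_ne_nil u (by simp)]

lemma walk_sublist : ∀ (l : List (ℕ × ℕ)) (u : ℕ × ℕ), List.Chain' cLT (u :: l) →
    l <+ walk u l := by
  intro l
  induction l with
  | nil => intro u _; simp [walk]
  | cons v rest ih =>
    intro u hchain
    rw [List.Chain', List.isChain_cons] at hchain
    have huv : cLT u v := hchain.1 v rfl
    have hrest : rest <+ walk v rest := by
      cases rest with
      | nil => simp [walk]
      | cons a tl => exact ih v hchain.2
    obtain ⟨_, hsl⟩ := seg_spec huv.1
    have hsegne : seg u v ≠ [] := by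
      intro hnil
      rw [hnil] at hsl
      simp at hsl
      exact huv.2 hsl
    have hsl' : (seg u v).getLast? = some v := by
      rwa [getLast?_cons_of_ne_nil u hsegne] at hsl
    have hdecomp : (seg u v).dropLast ++ [v] = seg u v :=
      List.dropLast_append_getLast? v hsl'
    show v :: rest <+ seg u v ++ walk v rest
    rw [← hdecomp, List.append_assoc]
    have h1 : v :: rest <+ [v] ++ walk v rest :=
      List.Sublist.append (List.Sublist.refl [v]) hrest
    exact h1.trans (List.sublist_append_right _ _)



lemma exists_path_through (M : ℕ) (hM : 1 ≤ M) (d : List (ℕ × ℕ))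
    (hpair : d.Pairwise cLT) (hgrid : ∀ c ∈ d, c ∈ allCells M) :
    ∃ p, IsUpRightPath M M p ∧ d <+ p := by
  classical
  set l₁ : List (ℕ × ℕ) := if d.head? = some (1, 1) then d.tail else d with hl₁
  have hchain₁ : List.Chain' cLT ((1, 1) :: l₁) := by
    by_cases h : d.head? = some (1, 1)
    · rw [hl₁, if_pos h]
      have : d = (1, 1) :: d.tail := by
        cases d with
        | nil => simp at h
        | cons a t => simp at h; simp [h]
      rw [← this]
      exact hpair.isChain
    · rw [hl₁, if_neg h]
      rw [List.Chain', List.isChain_cons]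
      refine ⟨?_, hpair.isChain⟩
      intro y hy
      have hyd : y ∈ d := by
        cases d with
        | nil => simp at hy
        | cons a t => simp at hy; subst hy; exact List.mem_cons_self
      have hygrid := mem_allCells.1 (hgrid y hyd)
      refine ⟨⟨hygrid.1, hygrid.2.2.1⟩, ?_⟩
      intro heq
      apply h
      cases d with
      | nil => simp at hy
      | cons a t => simp at hy; subst hy; simp [← heq]
  have hsub₁ : d <+ (1, 1) :: l₁ := by
    by_cases h : d.head? = some (1, 1)
    · rw [hl₁, if_pos h]
      have : d = (1, 1) :: d.tail := by
        cases d with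
        | nil => simp at h
        | cons a t => simp at h; simp [h]
      rw [← this]
    · rw [hl₁, if_neg h]
      exact List.sublist_cons_self _ _
  have hgrid₁ : ∀ c ∈ l₁, c ∈ allCells M := by
    intro c hc
    refine hgrid c ?_
    by_cases h : d.head? = some (1, 1)
    · rw [hl₁, if_pos h] at hc; exact List.mem_of_mem_tail hc
    · rwa [hl₁, if_neg h] at hc
  set l₂ : List (ℕ × ℕ) :=
    if ((1, 1) :: l₁).getLast? = some (M, M) then l₁ else l₁ ++ [(M, M)] with hl₂
  have happ : (1, 1) :: (l₁ ++ [(M, M)]) = ((1, 1) :: l₁) ++ [(M, M)] := rfl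
  have hchain₂ : List.Chain' cLT ((1, 1) :: l₂) := by
    by_cases h : ((1, 1) :: l₁).getLast? = some (M, M)
    · rw [hl₂, if_pos h]; exact hchain₁
    · rw [hl₂, if_neg h, happ]
      apply List.IsChain.append hchain₁ (by simp)
      intro x hx y hy
      simp only [List.head?_cons, Option.mem_def, Option.some.injEq] at hy
      subst hy
      have hxmem : x ∈ (1, 1) :: l₁ := by
        have := List.mem_getLast?_eq_getLast hx
        obtain ⟨hne, rfl⟩ := this
        exact List.getLast_mem hne
      have hxle : cLE x (M, M) := by
        rcases List.mem_cons.1 hxmem with rfl | hxl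
        · exact ⟨hM, hM⟩
        · have := mem_allCells.1 (hgrid₁ x hxl)
          exact ⟨this.2.1, this.2.2.2⟩
      refine ⟨hxle, ?_⟩
      intro heq
      exact h (by rwa [heq] at hx)
  have hlast₂ : ((1, 1) :: l₂).getLast? = some (M, M) := by
    by_cases h : ((1, 1) :: l₁).getLast? = some (M, M)
    · rw [hl₂, if_pos h]; exact h
    · rw [hl₂, if_neg h, happ, List.getLast?_concat]
  have hsub₂ : ((1, 1) :: l₁) <+ ((1, 1) :: l₂) := by
    by_cases h : ((1, 1) :: l₁).getLast? = some (M, M)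
    · rw [hl₂, if_pos h]
    · rw [hl₂, if_neg h]
      exact List.Sublist.cons₂ _ (List.sublist_append_left _ _)
  have hchainLE : List.Chain' cLE ((1, 1) :: l₂) := hchain₂.imp (fun {a b} h => h.1)
  obtain ⟨hwchain, hwlast⟩ := walk_spec l₂ (1, 1) hchainLE
  refine ⟨(1, 1) :: walk (1, 1) l₂, ⟨rfl, ?_, hwchain⟩, ?_⟩
  · rw [hwlast]; exact hlast₂
  · exact (hsub₁.trans hsub₂).trans
      (List.Sublist.cons₂ _ (walk_sublist l₂ (1, 1) hchain₂))


lemma stepR_lexLT {u v : ℕ × ℕ} (h : stepR u v) : lexLT u v := by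
  rcases h with h | h <;> subst h
  · left; simp
  · right; simp

lemma stepR_cLE {u v : ℕ × ℕ} (h : stepR u v) : cLE u v := by
  rcases h with h | h <;> subst h
  · exact ⟨by simp, le_rfl⟩
  · exact ⟨le_rfl, by simp⟩

lemma path_pairwise_lexLT {p : List (ℕ × ℕ)} (hp : p.Chain' stepR) :
    p.Pairwise lexLT := by
  haveI : IsTrans (ℕ × ℕ) lexLT :=
    ⟨fun a b c h1 h2 => by rcases h1 with h1 | h1 <;> rcases h2 with h2 | h2 <;>
      [left; left; left; right] <;> omega⟩
  exact List.isChain_iff_pairwise.1 (hp.imp fun {a b} => stepR_lexLT)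

lemma path_pairwise_cLE {p : List (ℕ × ℕ)} (hp : p.Chain' stepR) :
    p.Pairwise cLE := by
  haveI : IsTrans (ℕ × ℕ) cLE :=
    ⟨fun a b c h1 h2 => ⟨le_trans h1.1 h2.1, le_trans h1.2 h2.2⟩⟩
  exact List.isChain_iff_pairwise.1 (hp.imp fun {a b} => stepR_cLE)

lemma path_grid {M : ℕ} (hM : 1 ≤ M) {p : List (ℕ × ℕ)} (hp : IsUpRightPath M M p) :
    ∀ c ∈ p, c ∈ allCells M := by
  obtain ⟨hhead, hlast, hchain⟩ := hp
  have hpair : p.Pairwise cLE := path_pairwise_cLE hchain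
  intro c hc
  have hlow : cLE (1, 1) c := by
    cases p with
    | nil => simp at hhead
    | cons a t =>
      simp only [List.head?_cons, Option.some.injEq] at hhead
      subst hhead
      rcases List.mem_cons.1 hc with rfl | hct
      · exact ⟨le_rfl, le_rfl⟩
      · exact (List.pairwise_cons.1 hpair).1 c hct
  have hup : cLE c (M, M) := by
    have hdecomp : p.dropLast ++ [(M, M)] = p :=
      List.dropLast_append_getLast? _ hlast
    rw [← hdecomp] at hpair hc
    rw [List.pairwise_append] at hpair
    rcases List.mem_append.1 hc with hcd | hcm
    · exact hpair.2.2 c hcd (M, M) (by simp)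
    · simp at hcm; subst hcm; exact ⟨le_rfl, le_rfl⟩
  exact mem_allCells.2 ⟨hlow.1, hup.1, hlow.2, hup.2⟩

lemma lexLT_asymm : ∀ a b : ℕ × ℕ, lexLT a b → ¬ lexLT b a := by
  intro a b h1 h2
  rcases h1 with h1 | h1 <;> rcases h2 with h2 | h2 <;> omega

/-- Direction C: each up-right path yields a sorted sublist of the matrix word. -/
lemma exists_sorted_of_path (M : ℕ) (hM : 1 ≤ M) (w : ℕ × ℕ → ℕ)
    {p : List (ℕ × ℕ)} (hp : IsUpRightPath M M p) :
    ∃ s, s <+ matrixWord M w ∧ s.Pairwise (· ≤ ·) ∧ s.length = (p.map w).sum := by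
  refine ⟨p.flatMap fun c => List.replicate (w c) c.2, ?_, ?_, ?_⟩
  · rw [matrixWord_eq]
    refine Sublist.flatMap' _ ?_
    exact sublist_of_pairwise_subset lexLT_asymm
      (path_pairwise_lexLT hp.2.2) (allCells_pairwise M) (path_grid hM hp)
  · refine pairwise_flatMap (path_pairwise_cLE hp.2.2) (fun c _ => ?_) ?_
    · rw [List.pairwise_replicate]; right; exact le_rfl
    · intro a b hab x hx y hy
      rw [List.eq_of_mem_replicate hx, List.eq_of_mem_replicate hy]
      exact hab.2
  · rw [List.length_flatMap]
    congr 1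
    simp [Function.comp]

/-- Direction D: each sorted sublist of the matrix word is dominated by a path sum. -/
lemma count_indep {α : Type} [DecidableEq α] [inst : BEq α] [@LawfulBEq α inst]
    (a : α) (l : List α) :
    @List.count α inst a l = @List.count α instBEqOfDecidableEq a l := by
  induction l with
  | nil => rfl
  | cons b l ih =>
    simp only [List.count_cons, ih]
    congr 1
    by_cases h : b = a <;> simp [h]

lemma exists_path_of_sorted (M : ℕ) (hM : 1 ≤ M) (w : ℕ × ℕ → ℕ)
    {s : List ℕ} (hs : s <+ matrixWord M w) (hsort : s.Pairwise (· ≤ ·)) :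
    ∃ p, IsUpRightPath M M p ∧ s.length ≤ (p.map w).sum := by
  rw [← tagged_map_snd M w] at hs
  obtain ⟨t, ht, rfl⟩ := List.sublist_map_iff.1 hs
  have hlex : t.Pairwise lexLE := (tagged_pairwise M w).sublist ht
  have hsnd : t.Pairwise fun u v => u.2 ≤ v.2 := List.pairwise_map.1 hsort
  have hcle : t.Pairwise cLE := (hlex.and hsnd).imp fun {a b} h => by
    rcases h.1 with h1 | h1
    · exact ⟨le_of_lt h1, h.2⟩
    · exact ⟨le_of_eq h1.1, h.2⟩
  set d := t.dedup with hd
  have hdsub : d <+ t := List.dedup_sublist t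
  have hdclt : d.Pairwise cLT :=
    ((hcle.sublist hdsub).and (List.nodup_dedup t)).imp fun {a b} h => ⟨h.1, h.2⟩
  have hdgrid : ∀ c ∈ d, c ∈ allCells M := fun c hc =>
    mem_tagged (ht.subset (hdsub.subset hc))
  obtain ⟨p, hpath, hdp⟩ := exists_path_through M hM d hdclt hdgrid
  refine ⟨p, hpath, ?_⟩
  have h1 : (t.map Prod.snd).length = t.length := List.length_map _
  have h2 : t.length = (d.map fun x => t.count x).sum := by
    rw [show (d.map fun x => t.count x) = d.map fun x => @List.count _ instBEqOfDecidableEq x t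
      from List.map_congr_left fun x _ => count_indep x t]
    exact (List.sum_map_count_dedup_eq_length t).symm
  have h3 : (d.map fun x => t.count x).sum ≤ (d.map w).sum := by
    apply List.sum_le_sum
    intro c hc
    exact le_trans (ht.count_le c) (count_tagged M w c)
  have h4 : (d.map w).sum ≤ (p.map w).sum :=
    (hdp.map w).sum_le_sum (fun a _ => Nat.zero_le a)
  omega


end RSK

/-- Under the RSK correspondence applied to the `M × M` nonnegative integer matrix
`(w(i,j))`, the length `λ_1` of the first row of the common shape of the resulting
pair of semistandard tableaux equals the maximum of `∑_{(i,j) ∈ π} w(i,j)` over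
up/right paths `π` from `(1,1)` to `(M,M)`. -/
theorem rsk_first_row_eq_last_passage (M : ℕ) (hM : 1 ≤ M) (w : ℕ × ℕ → ℕ) :
    ((rskTableau (matrixWord M w)).headD []).length =
      sSup {s : ℕ | ∃ p : List (ℕ × ℕ),
        IsUpRightPath M M p ∧ s = (p.map w).sum} := by
  rw [RSK.headD_rskTableau]
  have hub : ∀ x ∈ {s : ℕ | ∃ p : List (ℕ × ℕ),
      IsUpRightPath M M p ∧ s = (p.map w).sum}, x ≤ (RSK.firstRow (matrixWord M w)).length := by
    rintro x ⟨p, hp, rfl⟩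
    obtain ⟨s, hs, hsort, hlen⟩ := RSK.exists_sorted_of_path M hM w hp
    rw [← hlen]
    exact RSK.sorted_sublist_length_le _ s hs hsort
  obtain ⟨s₀, hs₀, hsort₀, hlen₀⟩ := RSK.exists_sorted_sublist_length (matrixWord M w)
  obtain ⟨p₀, hp₀, hge₀⟩ := RSK.exists_path_of_sorted M hM w hs₀ hsort₀
  have hmem : (p₀.map w).sum ∈ {s : ℕ | ∃ p : List (ℕ × ℕ),
      IsUpRightPath M M p ∧ s = (p.map w).sum} := ⟨p₀, hp₀, rfl⟩
  have hsum : (p₀.map w).sum = (RSK.firstRow (matrixWord M w)).length :=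
    le_antisymm (hub _ hmem) (by omega)
  have hLS : (RSK.firstRow (matrixWord M w)).length ∈ {s : ℕ | ∃ p : List (ℕ × ℕ),
      IsUpRightPath M M p ∧ s = (p.map w).sum} := hsum ▸ hmem
  exact le_antisymm
    (le_csSup ⟨(RSK.firstRow (matrixWord M w)).length, fun x hx => hub x hx⟩ hLS)
    (csSup_le ⟨(RSK.firstRow (matrixWord M w)).length, hLS⟩ hub)
end

section
/- The triple product identity Π_{i=1}^k Π_{j=1}^k Π_{ℓ=1}^n (i + j + ℓ − 1)/(i + j + ℓ − 2) = Π_{j=0}^{n−1} j!(j+2k)! / ((j+k)!)² holds for all positive integers n, k, and consequently lim_{n→∞} n^{−k²} Π_{j=0}^{n−1} j!(j+2k)!/((j+k)!)² = Π_{j=0}^{k−1} j!/(j+k)!. -/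
open Filter

lemma tele2 (c : ℝ) (hc : 2 ≤ c) (n : ℕ) :
    ∏ l ∈ Finset.Icc 1 n, (c + l - 1) / (c + l - 2) = (c + n - 1) / (c - 1) := by
  have h1 : c - 1 ≠ 0 := by linarith
  induction n with
  | zero => simp [div_self h1]
  | succ n ih =>
    have h2 : c + n - 1 ≠ 0 := by
      have : (0:ℝ) ≤ n := Nat.cast_nonneg n
      nlinarith
    rw [Finset.prod_Icc_succ_top (by omega), ih]
    push_cast
    have h3 : c + (↑n + 1) - 2 = c + ↑n - 1 := by ring
    rw [div_mul_div_comm, h3, mul_comm (c-1)]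
    exact mul_div_mul_left _ _ h2

lemma natprodR (m : ℕ) (k : ℕ) :
    ∏ i ∈ Finset.Icc 1 k, ((m : ℝ) + i) = (Nat.factorial (m + k) : ℝ) / Nat.factorial m := by
  have h : (Nat.factorial m : ℝ) ≠ 0 := Nat.cast_ne_zero.mpr (Nat.factorial_ne_zero m)
  induction k with
  | zero => simp [div_self h]
  | succ k ih =>
    rw [Finset.prod_Icc_succ_top (by omega), ih]
    have e : m + (k+1) = (m+k) + 1 := by ring
    rw [e, Nat.factorial_succ]
    push_cast
    field_simp
    ring

lemma closedform (k n : ℕ) :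
    (∏ i ∈ Finset.Icc 1 k, ∏ j ∈ Finset.Icc 1 k, ∏ l ∈ Finset.Icc 1 n,
        (((i : ℝ) + j + l - 1) / ((i : ℝ) + j + l - 2))) =
    ∏ i ∈ Finset.Icc 1 k, ∏ j ∈ Finset.Icc 1 k, (((i:ℝ) + j + n - 1) / ((i:ℝ) + j - 1)) := by
  refine Finset.prod_congr rfl fun i hi => Finset.prod_congr rfl fun j hj => ?_
  have hi1 : 1 ≤ i := (Finset.mem_Icc.mp hi).1
  have hj1 : 1 ≤ j := (Finset.mem_Icc.mp hj).1
  have hi1' : (1:ℝ) ≤ i := by exact_mod_cast hi1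
  have hj1' : (1:ℝ) ≤ j := by exact_mod_cast hj1
  exact tele2 ((i:ℝ) + j) (by linarith) n

lemma ident (k : ℕ) : ∀ n : ℕ,
    (∏ i ∈ Finset.Icc 1 k, ∏ j ∈ Finset.Icc 1 k, (((i:ℝ) + j + n - 1) / ((i:ℝ) + j - 1))) =
    ∏ j ∈ Finset.range n,
      (Nat.factorial j : ℝ) * Nat.factorial (j + 2 * k) / ((Nat.factorial (j + k) : ℝ)) ^ 2 := by
  intro n
  induction n with
  | zero =>
    simp only [Nat.cast_zero, add_zero, Finset.range_zero, Finset.prod_empty]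
    refine Finset.prod_eq_one fun i hi => Finset.prod_eq_one fun j hj => ?_
    have hi1 : (1:ℝ) ≤ i := by exact_mod_cast (Finset.mem_Icc.mp hi).1
    have hj1 : (1:ℝ) ≤ j := by exact_mod_cast (Finset.mem_Icc.mp hj).1
    exact div_self (by linarith)
  | succ n ih =>
    rw [Finset.prod_range_succ, ← ih]
    have hfac : ∀ m : ℕ, (Nat.factorial m : ℝ) ≠ 0 :=
      fun m => Nat.cast_ne_zero.mpr (Nat.factorial_ne_zero m)
    calc (∏ i ∈ Finset.Icc 1 k, ∏ j ∈ Finset.Icc 1 k, (((i:ℝ) + j + (n+1:ℕ) - 1) / ((i:ℝ) + j - 1)))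
        = ∏ i ∈ Finset.Icc 1 k, ∏ j ∈ Finset.Icc 1 k,
            ((((i:ℝ) + j + n - 1) / ((i:ℝ) + j - 1)) *
             ((((i:ℝ) + (n+1)) + j - 1) / (((i:ℝ) + (n+1)) + j - 2))) := by
          refine Finset.prod_congr rfl fun i hi => Finset.prod_congr rfl fun j hj => ?_
          have hi1 : (1:ℝ) ≤ i := by exact_mod_cast (Finset.mem_Icc.mp hi).1
          have hj1 : (1:ℝ) ≤ j := by exact_mod_cast (Finset.mem_Icc.mp hj).1
          have hn0 : (0:ℝ) ≤ n := Nat.cast_nonneg n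
          have h1 : (i:ℝ) + j - 1 ≠ 0 := by linarith
          have h2 : (i:ℝ) + j + n - 1 ≠ 0 := by linarith
          have h3 : (i:ℝ) + (n+1) + j - 2 ≠ 0 := by linarith
          push_cast
          field_simp
          ring
      _ = (∏ i ∈ Finset.Icc 1 k, ∏ j ∈ Finset.Icc 1 k, (((i:ℝ) + j + n - 1) / ((i:ℝ) + j - 1))) *
          ∏ i ∈ Finset.Icc 1 k, ∏ j ∈ Finset.Icc 1 k,
            ((((i:ℝ) + (n+1)) + j - 1) / (((i:ℝ) + (n+1)) + j - 2)) := by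
          simp [Finset.prod_mul_distrib]
      _ = (∏ i ∈ Finset.Icc 1 k, ∏ j ∈ Finset.Icc 1 k, (((i:ℝ) + j + n - 1) / ((i:ℝ) + j - 1))) *
          ((∏ i ∈ Finset.Icc 1 k, (((n + k : ℕ) : ℝ) + i)) /
           (∏ i ∈ Finset.Icc 1 k, ((n : ℝ) + i))) := by
          congr 1
          rw [← Finset.prod_div_distrib]
          refine Finset.prod_congr rfl fun i hi => ?_
          have hi1 : (1:ℝ) ≤ i := by exact_mod_cast (Finset.mem_Icc.mp hi).1
          have hn0 : (0:ℝ) ≤ n := Nat.cast_nonneg n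
          rw [tele2 ((i:ℝ) + (n+1)) (by linarith) k]
          push_cast
          ring
      _ = (∏ i ∈ Finset.Icc 1 k, ∏ j ∈ Finset.Icc 1 k, (((i:ℝ) + j + n - 1) / ((i:ℝ) + j - 1))) *
          ((Nat.factorial n : ℝ) * Nat.factorial (n + 2 * k) / ((Nat.factorial (n + k) : ℝ)) ^ 2) := by
          rw [natprodR (n + k) k, natprodR n k]
          congr 1
          have e : n + k + k = n + 2 * k := by ring
          rw [e]
          field_simp

lemma term_tendsto (c : ℝ) (hc : 0 < c) :
    Tendsto (fun n : ℕ => (c + n) / c / n) atTop (nhds c⁻¹) := by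
  have h1 : Tendsto (fun n : ℕ => (c * (1/n) + 1) * c⁻¹) atTop (nhds ((c * 0 + 1) * c⁻¹)) :=
    (((tendsto_const_nhds.mul tendsto_one_div_atTop_nhds_zero_nat).add tendsto_const_nhds).mul
      tendsto_const_nhds)
  have h2 : (c * 0 + 1) * c⁻¹ = c⁻¹ := by ring
  rw [h2] at h1
  refine h1.congr' ?_
  filter_upwards [eventually_ge_atTop 1] with n hn
  have hn' : (n:ℝ) ≠ 0 := by
    have : (0:ℝ) < n := by exact_mod_cast hn
    linarith
  field_simp

lemma final_prod (k : ℕ) :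
    ∏ i ∈ Finset.Icc 1 k, ∏ j ∈ Finset.Icc 1 k, ((i:ℝ) + j - 1)⁻¹ =
    ∏ j ∈ Finset.range k, (Nat.factorial j : ℝ) / Nat.factorial (j + k) := by
  have step : ∀ i ∈ Finset.Icc 1 k, ∏ j ∈ Finset.Icc 1 k, ((i:ℝ) + j - 1)⁻¹ =
      (Nat.factorial (i-1) : ℝ) / Nat.factorial ((i-1) + k) := by
    intro i hi
    have hi1 : 1 ≤ i := (Finset.mem_Icc.mp hi).1
    have hcast : ((i - 1 : ℕ) : ℝ) = (i:ℝ) - 1 := by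
      push_cast [hi1]; ring
    have : ∏ j ∈ Finset.Icc 1 k, ((i:ℝ) + j - 1)⁻¹ =
        (∏ j ∈ Finset.Icc 1 k, (((i-1:ℕ):ℝ) + j))⁻¹ := by
      rw [← Finset.prod_inv_distrib]
      refine Finset.prod_congr rfl fun j _ => ?_
      rw [hcast]; ring_nf
    rw [this, natprodR (i-1) k, inv_div]
  rw [Finset.prod_congr rfl step]
  refine Finset.prod_nbij' (fun a => a - 1) (fun b => b + 1) ?_ ?_ ?_ ?_ ?_
  · intro a ha; simp only [Finset.mem_Icc] at ha; simp only [Finset.mem_range]; omega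
  · intro b hb; simp only [Finset.mem_range] at hb; simp only [Finset.mem_Icc]; omega
  · intro a ha; simp only [Finset.mem_Icc] at ha; omega
  · intro a _; omega
  · intro a _; rfl

/-- The triple product identity
`∏_{i=1}^k ∏_{j=1}^k ∏_{ℓ=1}^n (i+j+ℓ-1)/(i+j+ℓ-2) = ∏_{j=0}^{n-1} j!(j+2k)!/((j+k)!)²`
for all positive `n, k`, together with the limit
`lim_{n→∞} n^{-k²} ∏_{j=0}^{n-1} j!(j+2k)!/((j+k)!)² = ∏_{j=0}^{k-1} j!/(j+k)!`. -/
theorem triple_product_identity_and_limit (k : ℕ) (hk : 1 ≤ k) :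
    (∀ n : ℕ, 1 ≤ n →
      (∏ i ∈ Finset.Icc 1 k, ∏ j ∈ Finset.Icc 1 k, ∏ l ∈ Finset.Icc 1 n,
          (((i : ℝ) + j + l - 1) / ((i : ℝ) + j + l - 2))) =
        ∏ j ∈ Finset.range n,
          (Nat.factorial j : ℝ) * Nat.factorial (j + 2 * k) /
            ((Nat.factorial (j + k) : ℝ)) ^ 2) ∧
    Tendsto
      (fun n : ℕ =>
        (∏ j ∈ Finset.range n,
            (Nat.factorial j : ℝ) * Nat.factorial (j + 2 * k) /
              ((Nat.factorial (j + k) : ℝ)) ^ 2) / (n : ℝ) ^ (k ^ 2))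
      atTop
      (nhds (∏ j ∈ Finset.range k,
        (Nat.factorial j : ℝ) / Nat.factorial (j + k))) := by
  constructor
  · intro n _
    rw [closedform k n, ident k n]
  · have hpow : ∀ n : ℕ, ((n:ℝ)) ^ (k ^ 2) =
        ∏ _i ∈ Finset.Icc 1 k, ∏ _j ∈ Finset.Icc 1 k, (n:ℝ) := by
      intro n
      rw [Finset.prod_const, Finset.prod_const, Nat.card_Icc, ← pow_mul]
      congr 1
      simp [pow_two]
    have heq : ∀ n : ℕ,
        (∏ j ∈ Finset.range n,
            (Nat.factorial j : ℝ) * Nat.factorial (j + 2 * k) /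
              ((Nat.factorial (j + k) : ℝ)) ^ 2) / (n : ℝ) ^ (k ^ 2)
        = ∏ i ∈ Finset.Icc 1 k, ∏ j ∈ Finset.Icc 1 k,
            (((i:ℝ) + j + n - 1) / ((i:ℝ) + j - 1) / n) := by
      intro n
      rw [← ident k n, hpow n, ← Finset.prod_div_distrib]
      exact Finset.prod_congr rfl fun i _ => (Finset.prod_div_distrib _ _).symm
    have hmain : Tendsto
        (fun n : ℕ => ∏ i ∈ Finset.Icc 1 k, ∏ j ∈ Finset.Icc 1 k,
            (((i:ℝ) + j + n - 1) / ((i:ℝ) + j - 1) / n)) atTop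
        (nhds (∏ i ∈ Finset.Icc 1 k, ∏ j ∈ Finset.Icc 1 k, ((i:ℝ) + j - 1)⁻¹)) := by
      refine tendsto_finset_prod _ fun i hi => tendsto_finset_prod _ fun j hj => ?_
      have hi1 : (1:ℝ) ≤ i := by exact_mod_cast (Finset.mem_Icc.mp hi).1
      have hj1 : (1:ℝ) ≤ j := by exact_mod_cast (Finset.mem_Icc.mp hj).1
      have ht := term_tendsto ((i:ℝ) + j - 1) (by linarith)
      refine ht.congr fun n => ?_
      ring_nf
    rw [final_prod k] at hmain
    exact hmain.congr fun n => (heq n).symm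
end

section
/- (Determinantal correlation functions of orthogonal polynomial ensembles) Let w ≥ 0 be a weight on a measure space (Ω, μ) with all moments finite, and let p_0, p_1, ... be the orthonormal polynomials for w dμ with leading coefficients κ_n > 0. Define K_N(x,y) = Σ_{k=0}^{N−1} p_k(x) p_k(y) (w(x)w(y))^{1/2} and u_N(x) = Z_N^{−1} Π_{i<j}(x_i − x_j)² Π_j w(x_j). Then for 1 ≤ m ≤ N, (N!/(N−m)!) ∫_{Ω^{N−m}} u_N(x) dμ(x_{m+1})...dμ(x_N) = det( K_N(x_i, x_j) )_{1≤i,j≤m}. -/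
open MeasureTheory

/-- The Christoffel–Darboux kernel
`K_N(x,y) = ∑_{k<N} p_k(x) p_k(y) √(w(x) w(y))`. -/
noncomputable def cdKernel (w : ℝ → ℝ) (p : ℕ → Polynomial ℝ) (N : ℕ) (x y : ℝ) : ℝ :=
  (∑ k ∈ Finset.range N, (p k).eval x * (p k).eval y) * Real.sqrt (w x * w y)

namespace OPEAux
open Finset

variable {μ : Measure ℝ} {w : ℝ → ℝ} {p : ℕ → Polynomial ℝ} {N : ℕ}

/-- polynomial times weight is integrable -/
lemma integrable_poly_mul_w (hw : ∀ x, 0 ≤ w x) (hwmeas : Measurable w)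
    (hmom : ∀ k : ℕ, Integrable (fun x => |x| ^ k * w x) μ) (q : Polynomial ℝ) :
    Integrable (fun t => q.eval t * w t) μ := by
  apply Integrable.mono'
    (g := fun t => ∑ k ∈ range (q.natDegree + 1), |q.coeff k| * (|t| ^ k * w t))
  · exact integrable_finset_sum _ fun k _ => (hmom k).const_mul _
  · exact ((q.continuous_aeval.measurable).mul hwmeas).aestronglyMeasurable
  · refine Filter.Eventually.of_forall fun t => ?_
    have h1 : |q.eval t| ≤ ∑ k ∈ range (q.natDegree + 1), |q.coeff k| * |t| ^ k := by
      conv_lhs => rw [q.eval_eq_sum_range]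
      refine (Finset.abs_sum_le_sum_abs _ _).trans ?_
      refine Finset.sum_le_sum fun k _ => ?_
      rw [abs_mul, abs_pow]
    have h2 : ‖q.eval t * w t‖ = |q.eval t| * w t := by
      rw [Real.norm_eq_abs, abs_mul, abs_of_nonneg (hw t)]
    rw [h2]
    calc |q.eval t| * w t ≤ (∑ k ∈ range (q.natDegree + 1), |q.coeff k| * |t| ^ k) * w t :=
          mul_le_mul_of_nonneg_right h1 (hw t)
      _ = _ := by rw [Finset.sum_mul]; exact Finset.sum_congr rfl fun k _ => by ring

lemma integrable_pjk (hw : ∀ x, 0 ≤ w x) (hwmeas : Measurable w)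
    (hmom : ∀ k : ℕ, Integrable (fun x => |x| ^ k * w x) μ) (j k : ℕ) :
    Integrable (fun t => (p j).eval t * (p k).eval t * w t) μ := by
  have := integrable_poly_mul_w (μ := μ) hw hwmeas hmom (p j * p k)
  simpa [Polynomial.eval_mul] using this


lemma K_mul_K (hw : ∀ x, 0 ≤ w x) (a b t : ℝ) :
    cdKernel w p N a t * cdKernel w p N t b =
      (∑ j ∈ range N, ∑ k ∈ range N,
        ((p j).eval a * (p k).eval b) * ((p j).eval t * (p k).eval t * w t)) *
        (Real.sqrt (w a) * Real.sqrt (w b)) := by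
  unfold cdKernel
  rw [Real.sqrt_mul (hw a), Real.sqrt_mul (hw t)]
  rw [mul_mul_mul_comm, Finset.sum_mul_sum]
  rw [show Real.sqrt (w a) * Real.sqrt (w t) * (Real.sqrt (w t) * Real.sqrt (w b))
      = (Real.sqrt (w t) * Real.sqrt (w t)) * (Real.sqrt (w a) * Real.sqrt (w b)) from by ring,
    Real.mul_self_sqrt (hw t)]
  simp only [Finset.sum_mul]
  exact Finset.sum_congr rfl fun j _ => Finset.sum_congr rfl fun k _ => by ring

lemma integrable_K_mul_K (hw : ∀ x, 0 ≤ w x) (hwmeas : Measurable w)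
    (hmom : ∀ k : ℕ, Integrable (fun x => |x| ^ k * w x) μ) (a b : ℝ) :
    Integrable (fun t => cdKernel w p N a t * cdKernel w p N t b) μ := by
  simp only [K_mul_K (p := p) (N := N) hw a b]
  apply Integrable.mul_const
  apply integrable_finset_sum _ fun j _ => ?_
  apply integrable_finset_sum _ fun k _ => ?_
  exact (integrable_pjk hw hwmeas hmom j k).const_mul _

lemma integral_K_mul_K (hw : ∀ x, 0 ≤ w x) (hwmeas : Measurable w)
    (hmom : ∀ k : ℕ, Integrable (fun x => |x| ^ k * w x) μ)
    (horth : ∀ j k, (∫ x, (p j).eval x * (p k).eval x * w x ∂μ) =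
      if j = k then (1 : ℝ) else 0) (a b : ℝ) :
    ∫ t, cdKernel w p N a t * cdKernel w p N t b ∂μ = cdKernel w p N a b := by
  simp only [K_mul_K (p := p) (N := N) hw a b]
  rw [integral_mul_const]
  rw [integral_finset_sum _ fun j _ => integrable_finset_sum _ fun k _ =>
    (integrable_pjk hw hwmeas hmom j k).const_mul _]
  have : ∀ j ∈ range N,
      (∫ t, ∑ k ∈ range N, ((p j).eval a * (p k).eval b) * ((p j).eval t * (p k).eval t * w t) ∂μ)
      = (p j).eval a * (p j).eval b := by
    intro j hj
    rw [integral_finset_sum _ fun k _ => (integrable_pjk hw hwmeas hmom j k).const_mul _]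
    have : ∀ k ∈ range N,
        (∫ t, ((p j).eval a * (p k).eval b) * ((p j).eval t * (p k).eval t * w t) ∂μ)
        = ((p j).eval a * (p k).eval b) * (if j = k then (1:ℝ) else 0) := by
      intro k _
      rw [integral_const_mul, horth j k]
    rw [Finset.sum_congr rfl this]
    simp only [mul_ite, mul_one, mul_zero]
    rw [Finset.sum_ite_eq (range N) j (fun k => (p j).eval a * (p k).eval b)]
    simp [hj]
  rw [Finset.sum_congr rfl this]
  simp only [cdKernel, Real.sqrt_mul (hw a)]

lemma K_diag (hw : ∀ x, 0 ≤ w x) (t : ℝ) :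
    cdKernel w p N t t = ∑ k ∈ range N, (p k).eval t * (p k).eval t * w t := by
  unfold cdKernel
  rw [Real.sqrt_mul_self (hw t), Finset.sum_mul]

lemma integrable_K_diag (hw : ∀ x, 0 ≤ w x) (hwmeas : Measurable w)
    (hmom : ∀ k : ℕ, Integrable (fun x => |x| ^ k * w x) μ) :
    Integrable (fun t => cdKernel w p N t t) μ := by
  simp only [K_diag (p := p) (N := N) hw]
  exact integrable_finset_sum _ fun k _ => integrable_pjk hw hwmeas hmom k k

lemma integral_K_diag (hw : ∀ x, 0 ≤ w x) (hwmeas : Measurable w)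
    (hmom : ∀ k : ℕ, Integrable (fun x => |x| ^ k * w x) μ)
    (horth : ∀ j k, (∫ x, (p j).eval x * (p k).eval x * w x ∂μ) =
      if j = k then (1 : ℝ) else 0) :
    ∫ t, cdKernel w p N t t ∂μ = N := by
  simp only [K_diag (p := p) (N := N) hw]
  rw [integral_finset_sum _ fun k _ => integrable_pjk hw hwmeas hmom k k]
  simp [horth]

lemma measurable_K_comp {α : Type*} [MeasurableSpace α] (hwmeas : Measurable w)
    {f g : α → ℝ} (hf : Measurable f) (hg : Measurable g) :
    Measurable fun a => cdKernel w p N (f a) (g a) := by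
  unfold cdKernel
  apply Measurable.mul
  · apply Finset.measurable_sum _ fun k _ => ?_
    exact ((p k).continuous.measurable.comp hf).mul ((p k).continuous.measurable.comp hg)
  · exact Real.continuous_sqrt.measurable.comp ((hwmeas.comp hf).mul (hwmeas.comp hg))

lemma S_nonneg (p : ℕ → Polynomial ℝ) (N : ℕ) (t : ℝ) :
    0 ≤ ∑ k ∈ range N, (p k).eval t * (p k).eval t :=
  Finset.sum_nonneg fun k _ => mul_self_nonneg _

lemma abs_K_le (hw : ∀ x, 0 ≤ w x) (a b : ℝ) :
    |cdKernel w p N a b| ≤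
      (Real.sqrt (∑ k ∈ range N, (p k).eval a * (p k).eval a) * Real.sqrt (w a)) *
      (Real.sqrt (∑ k ∈ range N, (p k).eval b * (p k).eval b) * Real.sqrt (w b)) := by
  have hS : |∑ k ∈ range N, (p k).eval a * (p k).eval b| ≤
      Real.sqrt (∑ k ∈ range N, (p k).eval a * (p k).eval a) *
      Real.sqrt (∑ k ∈ range N, (p k).eval b * (p k).eval b) := by
    have h := Finset.sum_mul_sq_le_sq_mul_sq (range N)
      (fun k => (p k).eval a) (fun k => (p k).eval b)
    have h2 : |∑ k ∈ range N, (p k).eval a * (p k).eval b|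
        = Real.sqrt ((∑ k ∈ range N, (p k).eval a * (p k).eval b) ^ 2) :=
      (Real.sqrt_sq_eq_abs _).symm
    rw [h2]
    refine (Real.sqrt_le_sqrt h).trans ?_
    rw [Real.sqrt_mul (Finset.sum_nonneg fun k _ => sq_nonneg _)]
    simp only [sq]
    exact le_refl _
  unfold cdKernel
  rw [abs_mul, abs_of_nonneg (Real.sqrt_nonneg _), Real.sqrt_mul (hw a)]
  calc |∑ k ∈ range N, (p k).eval a * (p k).eval b| * (Real.sqrt (w a) * Real.sqrt (w b))
      ≤ (Real.sqrt (∑ k ∈ range N, (p k).eval a * (p k).eval a) *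
         Real.sqrt (∑ k ∈ range N, (p k).eval b * (p k).eval b)) *
         (Real.sqrt (w a) * Real.sqrt (w b)) := by
        exact mul_le_mul_of_nonneg_right hS
          (mul_nonneg (Real.sqrt_nonneg _) (Real.sqrt_nonneg _))
    _ = _ := by ring

lemma abs_det_K_le (hw : ∀ x, 0 ≤ w x) {n : ℕ} (z : Fin n → ℝ) :
    |Matrix.det (Matrix.of fun i j : Fin n => cdKernel w p N (z i) (z j))|
      ≤ (n.factorial : ℝ) *
        ∏ i, ((∑ k ∈ range N, (p k).eval (z i) * (p k).eval (z i)) * w (z i)) := by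
  set g : Fin n → ℝ := fun i =>
    Real.sqrt (∑ k ∈ range N, (p k).eval (z i) * (p k).eval (z i)) * Real.sqrt (w (z i)) with hg
  have hgnn : ∀ i, 0 ≤ g i := fun i => mul_nonneg (Real.sqrt_nonneg _) (Real.sqrt_nonneg _)
  have hK : ∀ i j : Fin n, |cdKernel w p N (z i) (z j)| ≤ g i * g j := fun i j => abs_K_le hw _ _
  rw [Matrix.det_apply']
  calc |∑ σ : Equiv.Perm (Fin n), ((Equiv.Perm.sign σ : ℤ) : ℝ) *
          ∏ i, (Matrix.of fun i j : Fin n => cdKernel w p N (z i) (z j)) (σ i) i|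
      ≤ ∑ σ : Equiv.Perm (Fin n), |((Equiv.Perm.sign σ : ℤ) : ℝ) *
          ∏ i, (Matrix.of fun i j : Fin n => cdKernel w p N (z i) (z j)) (σ i) i| :=
        Finset.abs_sum_le_sum_abs _ _
    _ ≤ ∑ _σ : Equiv.Perm (Fin n), ∏ i, (g i * g i) := by
        refine Finset.sum_le_sum fun σ _ => ?_
        rw [abs_mul]
        have hsgn : |((Equiv.Perm.sign σ : ℤ) : ℝ)| = 1 := by
          rcases Int.units_eq_one_or (Equiv.Perm.sign σ) with h | h <;> simp [h]
        rw [hsgn, one_mul, Finset.abs_prod]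
        have step1 : ∏ i, |(Matrix.of fun i j : Fin n => cdKernel w p N (z i) (z j)) (σ i) i|
            ≤ ∏ i, (g (σ i) * g i) := by
          refine Finset.prod_le_prod (fun i _ => abs_nonneg _) fun i _ => ?_
          exact hK (σ i) i
        refine step1.trans (le_of_eq ?_)
        rw [Finset.prod_mul_distrib, Equiv.prod_comp σ g, ← Finset.prod_mul_distrib]
    _ = _ := by
        rw [Finset.sum_const, Finset.card_univ, Fintype.card_perm, Fintype.card_fin,
          nsmul_eq_mul]
        congr 1
        refine Finset.prod_congr rfl fun i _ => ?_
        rw [hg, mul_mul_mul_comm, Real.mul_self_sqrt (S_nonneg p N _),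
          Real.mul_self_sqrt (hw _)]

lemma measurable_det_K {α : Type*} [MeasurableSpace α] (hwmeas : Measurable w)
    {n : ℕ} {z : α → Fin n → ℝ} (hz : ∀ i, Measurable fun a => z a i) :
    Measurable fun a =>
      Matrix.det (Matrix.of fun i j : Fin n => cdKernel w p N (z a i) (z a j)) := by
  simp only [Matrix.det_apply', Matrix.of_apply]
  apply Finset.measurable_sum _ fun σ _ => ?_
  apply Measurable.const_mul
  apply Finset.measurable_prod _ fun i _ => ?_
  exact measurable_K_comp hwmeas (hz (σ i)) (hz i)

/-- product of one-variable integrable functions is integrable w.r.t. `Measure.pi`. -/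
lemma integrable_pi_prod [SigmaFinite μ] {k : ℕ} {f : ℝ → ℝ} (hf : Integrable f μ) :
    Integrable (fun y : Fin k → ℝ => ∏ j, f (y j)) (Measure.pi fun _ => μ) := by
  induction k with
  | zero =>
      simp only [Finset.univ_eq_empty, Finset.prod_empty]
      rw [integrable_const_iff]
      right
      constructor
      rw [Measure.pi_empty_univ]
      exact ENNReal.one_lt_top
  | succ n ih =>
      have mp := (measurePreserving_piFinSuccAbove (fun _ : Fin (n + 1) => μ) 0).symm
      rw [← mp.integrable_comp_emb (MeasurableEquiv.measurableEmbedding _)]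
      have : ((fun y : Fin (n+1) → ℝ => ∏ j, f (y j)) ∘
          (MeasurableEquiv.piFinSuccAbove (fun _ : Fin (n + 1) => ℝ) 0).symm)
          = fun q : ℝ × (Fin n → ℝ) => f q.1 * ∏ j, f (q.2 j) := by
        funext q
        simp only [Function.comp_apply, MeasurableEquiv.piFinSuccAbove_symm_apply]
        rw [Fin.insertNthEquiv, Equiv.coe_fn_mk, Fin.insertNth_zero']
        rw [Fin.prod_univ_succ]
        simp [Fin.cons_succ]
      rw [this]
      exact hf.mul_prod ih

lemma term_zero {n : ℕ} (x : Fin n → ℝ) (e : Equiv.Perm (Fin n)) :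
    (fun t => ((Equiv.Perm.sign (Equiv.Perm.decomposeFin.symm ((0 : Fin (n+1)), e)) : ℤ) : ℝ) *
      ∏ i : Fin (n+1), cdKernel w p N
        ((Fin.cons t x : Fin (n+1) → ℝ) (Equiv.Perm.decomposeFin.symm ((0 : Fin (n+1)), e) i)) ((Fin.cons t x : Fin (n+1) → ℝ) i))
    = fun t => (((Equiv.Perm.sign e : ℤ) : ℝ) *
        ∏ i : Fin n, cdKernel w p N (x (e i)) (x i)) * cdKernel w p N t t := by
  funext t
  rw [Fin.prod_univ_succ]
  simp only [Equiv.Perm.decomposeFin_symm_apply_zero, Fin.cons_zero,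
    Equiv.Perm.decomposeFin_symm_apply_succ, Equiv.swap_self, Equiv.refl_apply, Fin.cons_succ,
    Equiv.Perm.decomposeFin.symm_sign, if_pos rfl, if_true, one_mul]
  ring

lemma term_succ {n : ℕ} (x : Fin n → ℝ) (j : Fin n) (e : Equiv.Perm (Fin n)) :
    (fun t => ((Equiv.Perm.sign (Equiv.Perm.decomposeFin.symm (j.succ, e)) : ℤ) : ℝ) *
      ∏ i : Fin (n+1), cdKernel w p N
        ((Fin.cons t x : Fin (n+1) → ℝ) (Equiv.Perm.decomposeFin.symm (j.succ, e) i)) ((Fin.cons t x : Fin (n+1) → ℝ) i))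
    = fun t => (-((Equiv.Perm.sign e : ℤ) : ℝ) *
        ∏ i ∈ Finset.univ.erase (e.symm j), cdKernel w p N (x (e i)) (x i)) *
        (cdKernel w p N (x j) t * cdKernel w p N t (x (e.symm j))) := by
  funext t
  rw [Fin.prod_univ_succ]
  simp only [Equiv.Perm.decomposeFin_symm_apply_zero, Fin.cons_zero,
    Equiv.Perm.decomposeFin_symm_apply_succ, Fin.cons_succ]
  rw [← Finset.mul_prod_erase Finset.univ _ (Finset.mem_univ (e.symm j))]
  rw [show e (e.symm j) = j from e.apply_symm_apply j]
  rw [Equiv.swap_apply_right, Fin.cons_zero]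
  have herase : ∀ i ∈ Finset.univ.erase (e.symm j),
      cdKernel w p N ((Fin.cons t x : Fin (n+1) → ℝ) (Equiv.swap 0 j.succ (e i).succ)) (x i)
      = cdKernel w p N (x (e i)) (x i) := by
    intro i hi
    have hne : e i ≠ j := fun h => (Finset.mem_erase.mp hi).1 (by rw [← h, e.symm_apply_apply])
    rw [Equiv.swap_apply_of_ne_of_ne (Fin.succ_ne_zero _)
      (fun hc => hne (Fin.succ_injective _ hc)), Fin.cons_succ]
  rw [Finset.prod_congr rfl herase]
  rw [Equiv.Perm.decomposeFin.symm_sign, if_neg (Fin.succ_ne_zero j)]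
  push_cast
  ring

lemma step [SigmaFinite μ] (hw : ∀ x, 0 ≤ w x) (hwmeas : Measurable w)
    (hmom : ∀ k : ℕ, Integrable (fun x => |x| ^ k * w x) μ)
    (horth : ∀ j k, (∫ x, (p j).eval x * (p k).eval x * w x ∂μ) =
      if j = k then (1 : ℝ) else 0)
    {n : ℕ} (x : Fin n → ℝ) :
    ∫ t, Matrix.det (Matrix.of fun i j : Fin (n+1) =>
        cdKernel w p N ((Fin.cons t x : Fin (n+1) → ℝ) i) ((Fin.cons t x : Fin (n+1) → ℝ) j)) ∂μ
    = ((N : ℝ) - n) *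
        Matrix.det (Matrix.of fun i j : Fin n => cdKernel w p N (x i) (x j)) := by
  have hdet : Matrix.det (Matrix.of fun i j : Fin n => cdKernel w p N (x i) (x j))
      = ∑ e : Equiv.Perm (Fin n), ((Equiv.Perm.sign e : ℤ) : ℝ) *
          ∏ i : Fin n, cdKernel w p N (x (e i)) (x i) := by
    rw [Matrix.det_apply']; rfl
  have key : (fun t => Matrix.det (Matrix.of fun i j : Fin (n+1) =>
      cdKernel w p N ((Fin.cons t x : Fin (n+1) → ℝ) i) ((Fin.cons t x : Fin (n+1) → ℝ) j)))
      = fun t => ∑ qe : Fin (n+1) × Equiv.Perm (Fin n),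
          ((Equiv.Perm.sign (Equiv.Perm.decomposeFin.symm qe) : ℤ) : ℝ) *
          ∏ i : Fin (n+1), cdKernel w p N
            ((Fin.cons t x : Fin (n+1) → ℝ) (Equiv.Perm.decomposeFin.symm qe i)) ((Fin.cons t x : Fin (n+1) → ℝ) i) := by
    funext t
    rw [Matrix.det_apply']
    rw [← Equiv.sum_comp (Equiv.Perm.decomposeFin.symm :
      Fin (n+1) × Equiv.Perm (Fin n) ≃ Equiv.Perm (Fin (n+1)))
      (fun σ => ((Equiv.Perm.sign σ : ℤ) : ℝ) * ∏ i : Fin (n+1),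
        (Matrix.of fun i j : Fin (n+1) =>
          cdKernel w p N ((Fin.cons t x : Fin (n+1) → ℝ) i) ((Fin.cons t x : Fin (n+1) → ℝ) j)) (σ i) i)]
    rfl
  rw [key]
  rw [integral_finset_sum _ (fun qe _ => ?_)]
  swap
  · -- integrability of each term
    rcases qe with ⟨q, e⟩
    induction q using Fin.cases with
    | zero =>
        rw [term_zero]
        exact (integrable_K_diag hw hwmeas hmom).const_mul _
    | succ j =>
        rw [term_succ]
        exact (integrable_K_mul_K hw hwmeas hmom (x j) (x (e.symm j))).const_mul _
  rw [Fintype.sum_prod_type, Fin.sum_univ_succ]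
  have hzero : ∑ e : Equiv.Perm (Fin n), (∫ t,
      ((Equiv.Perm.sign (Equiv.Perm.decomposeFin.symm ((0 : Fin (n+1)), e)) : ℤ) : ℝ) *
      ∏ i : Fin (n+1), cdKernel w p N
        ((Fin.cons t x : Fin (n+1) → ℝ) (Equiv.Perm.decomposeFin.symm ((0 : Fin (n+1)), e) i)) ((Fin.cons t x : Fin (n+1) → ℝ) i) ∂μ)
      = (N : ℝ) * Matrix.det (Matrix.of fun i j : Fin n => cdKernel w p N (x i) (x j)) := by
    rw [hdet, Finset.mul_sum]
    refine Finset.sum_congr rfl fun e _ => ?_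
    rw [term_zero, integral_const_mul, integral_K_diag hw hwmeas hmom horth]
    ring
  have hsucc : ∀ j : Fin n, ∑ e : Equiv.Perm (Fin n), (∫ t,
      ((Equiv.Perm.sign (Equiv.Perm.decomposeFin.symm (j.succ, e)) : ℤ) : ℝ) *
      ∏ i : Fin (n+1), cdKernel w p N
        ((Fin.cons t x : Fin (n+1) → ℝ) (Equiv.Perm.decomposeFin.symm (j.succ, e) i)) ((Fin.cons t x : Fin (n+1) → ℝ) i) ∂μ)
      = -Matrix.det (Matrix.of fun i j : Fin n => cdKernel w p N (x i) (x j)) := by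
    intro j
    rw [hdet, ← Finset.sum_neg_distrib]
    refine Finset.sum_congr rfl fun e _ => ?_
    rw [term_succ, integral_const_mul,
      integral_K_mul_K hw hwmeas hmom horth (x j) (x (e.symm j))]
    conv_rhs => rw [← Finset.mul_prod_erase Finset.univ
      (fun i => cdKernel w p N (x (e i)) (x i)) (Finset.mem_univ (e.symm j))]
    rw [e.apply_symm_apply]
    ring
  rw [hzero, Finset.sum_congr rfl (fun j _ => hsucc j), Finset.sum_const, Finset.card_univ,
    Fintype.card_fin, nsmul_eq_mul]
  ring


lemma measurable_append_apply {n k : ℕ} (x : Fin n → ℝ) (i : Fin (n + k)) :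
    Measurable fun y : Fin k → ℝ => Fin.append x y i := by
  refine Fin.addCases (motive := fun i => Measurable fun y : Fin k → ℝ => Fin.append x y i)
    (fun i => ?_) (fun j => ?_) i
  · simp only [Fin.append_left]; exact measurable_const
  · simp only [Fin.append_right]; exact measurable_pi_apply j

lemma integrable_det_append [SigmaFinite μ] (hw : ∀ x, 0 ≤ w x) (hwmeas : Measurable w)
    (hmom : ∀ k : ℕ, Integrable (fun x => |x| ^ k * w x) μ) {n k : ℕ} (x : Fin n → ℝ) :
    Integrable (fun y : Fin k → ℝ => Matrix.det (Matrix.of fun i j : Fin (n+k) =>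
      cdKernel w p N (Fin.append x y i) (Fin.append x y j))) (Measure.pi fun _ => μ) := by
  have hgint : Integrable (fun t => (∑ k ∈ range N, (p k).eval t * (p k).eval t) * w t) μ := by
    simp only [Finset.sum_mul]
    exact integrable_finset_sum _ fun k _ => integrable_pjk hw hwmeas hmom k k
  refine Integrable.mono'
    (g := fun y => (((n+k).factorial : ℝ) *
      ∏ i : Fin n, ((∑ k ∈ range N, (p k).eval (x i) * (p k).eval (x i)) * w (x i))) *
      ∏ j : Fin k, ((∑ k ∈ range N, (p k).eval (y j) * (p k).eval (y j)) * w (y j)))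
    ((integrable_pi_prod hgint).const_mul _)
    (measurable_det_K hwmeas (fun i => measurable_append_apply x i)).aestronglyMeasurable ?_
  refine Filter.Eventually.of_forall fun y => ?_
  rw [Real.norm_eq_abs]
  refine (abs_det_K_le hw (Fin.append x y)).trans (le_of_eq ?_)
  rw [Fin.prod_univ_add]
  simp only [Fin.append_left, Fin.append_right]
  ring

lemma integrable_det_pi [SigmaFinite μ] (hw : ∀ x, 0 ≤ w x) (hwmeas : Measurable w)
    (hmom : ∀ k : ℕ, Integrable (fun x => |x| ^ k * w x) μ) {k : ℕ} :
    Integrable (fun z : Fin k → ℝ => Matrix.det (Matrix.of fun i j : Fin k =>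
      cdKernel w p N (z i) (z j))) (Measure.pi fun _ => μ) := by
  have hgint : Integrable (fun t => (∑ k ∈ range N, (p k).eval t * (p k).eval t) * w t) μ := by
    simp only [Finset.sum_mul]
    exact integrable_finset_sum _ fun k _ => integrable_pjk hw hwmeas hmom k k
  refine Integrable.mono'
    (g := fun z => ((k.factorial : ℝ)) *
      ∏ j : Fin k, ((∑ k ∈ range N, (p k).eval (z j) * (p k).eval (z j)) * w (z j)))
    ((integrable_pi_prod hgint).const_mul _)
    (measurable_det_K hwmeas (fun i => measurable_pi_apply i)).aestronglyMeasurable ?_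
  refine Filter.Eventually.of_forall fun z => ?_
  rw [Real.norm_eq_abs]
  exact abs_det_K_le hw z

lemma det_snoc_eq_cons {n : ℕ} (z : Fin n → ℝ) (t : ℝ) :
    Matrix.det (Matrix.of fun i j : Fin (n+1) => cdKernel w p N
      ((Fin.snoc z t : Fin (n+1) → ℝ) i) ((Fin.snoc z t : Fin (n+1) → ℝ) j))
    = Matrix.det (Matrix.of fun i j : Fin (n+1) => cdKernel w p N
      ((Fin.cons t z : Fin (n+1) → ℝ) i) ((Fin.cons t z : Fin (n+1) → ℝ) j)) := by
  have hz := Fin.snoc_eq_cons_rotate z t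
  rw [show (Matrix.of fun i j : Fin (n+1) => cdKernel w p N
        ((Fin.snoc z t : Fin (n+1) → ℝ) i) ((Fin.snoc z t : Fin (n+1) → ℝ) j))
      = (Matrix.of fun i j : Fin (n+1) => cdKernel w p N
        ((Fin.cons t z : Fin (n+1) → ℝ) i) ((Fin.cons t z : Fin (n+1) → ℝ) j)).submatrix
          (finRotate (n+1)) (finRotate (n+1)) by
    ext i j
    rw [Matrix.submatrix_apply, Matrix.of_apply, Matrix.of_apply, hz]]
  exact Matrix.det_submatrix_equiv_self _ _

lemma iter [SigmaFinite μ] (hw : ∀ x, 0 ≤ w x) (hwmeas : Measurable w)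
    (hmom : ∀ k : ℕ, Integrable (fun x => |x| ^ k * w x) μ)
    (horth : ∀ j k, (∫ x, (p j).eval x * (p k).eval x * w x ∂μ) =
      if j = k then (1 : ℝ) else 0)
    {n : ℕ} (x : Fin n → ℝ) : ∀ k : ℕ,
    (∫ y : Fin k → ℝ, Matrix.det (Matrix.of fun i j : Fin (n+k) =>
      cdKernel w p N (Fin.append x y i) (Fin.append x y j)) ∂(Measure.pi fun _ => μ))
    = (∏ s ∈ range k, ((N:ℝ) - (n + s))) *
      Matrix.det (Matrix.of fun i j : Fin n => cdKernel w p N (x i) (x j)) := by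
  intro k
  induction k with
  | zero =>
      have hconst : ∀ y : Fin 0 → ℝ,
          Matrix.det (Matrix.of fun i j : Fin (n+0) =>
            cdKernel w p N (Fin.append x y i) (Fin.append x y j))
          = Matrix.det (Matrix.of fun i j : Fin n => cdKernel w p N (x i) (x j)) := by
        intro y
        have : ∀ i : Fin (n+0), Fin.append x y i = x i := by
          intro i
          rw [Subsingleton.elim y Fin.elim0, Fin.append_elim0]
          rfl
        congr 1
        ext i j
        rw [Matrix.of_apply, Matrix.of_apply, this i, this j]
      rw [show (fun y : Fin 0 → ℝ => Matrix.det (Matrix.of fun i j : Fin (n+0) =>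
          cdKernel w p N (Fin.append x y i) (Fin.append x y j)))
        = fun _ : Fin 0 → ℝ => Matrix.det (Matrix.of fun i j : Fin n =>
          cdKernel w p N (x i) (x j)) from funext hconst]
      rw [integral_const]
      simp [Measure.real, Measure.pi_empty_univ]
  | succ k ih =>
      have mp := (measurePreserving_piFinSuccAbove (fun _ : Fin (k+1) => μ) (Fin.last k)).symm
      rw [← mp.integral_comp']
      have hInt : Integrable (fun q : ℝ × (Fin k → ℝ) =>
          Matrix.det (Matrix.of fun i j : Fin (n+(k+1)) => cdKernel w p N
            (Fin.append x ((MeasurableEquiv.piFinSuccAbove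
              (fun _ : Fin (k+1) => ℝ) (Fin.last k)).symm q) i)
            (Fin.append x ((MeasurableEquiv.piFinSuccAbove
              (fun _ : Fin (k+1) => ℝ) (Fin.last k)).symm q) j)))
          (μ.prod (Measure.pi fun _ => μ)) := by
        exact (mp.integrable_comp_emb
          (MeasurableEquiv.measurableEmbedding _)).mpr
          (integrable_det_append hw hwmeas hmom x)
      rw [integral_prod _ hInt]
      rw [integral_integral_swap hInt]
      have hfun : ∀ (y : Fin k → ℝ) (t : ℝ),
          Matrix.det (Matrix.of fun i j : Fin (n+(k+1)) => cdKernel w p N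
            (Fin.append x ((MeasurableEquiv.piFinSuccAbove
              (fun _ : Fin (k+1) => ℝ) (Fin.last k)).symm (t, y)) i)
            (Fin.append x ((MeasurableEquiv.piFinSuccAbove
              (fun _ : Fin (k+1) => ℝ) (Fin.last k)).symm (t, y)) j))
          = Matrix.det (Matrix.of fun i j : Fin ((n+k)+1) => cdKernel w p N
            ((Fin.cons t (Fin.append x y) : Fin ((n+k)+1) → ℝ) i)
            ((Fin.cons t (Fin.append x y) : Fin ((n+k)+1) → ℝ) j)) := by
        intro y t
        have he : ((MeasurableEquiv.piFinSuccAbove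
            (fun _ : Fin (k+1) => ℝ) (Fin.last k)).symm (t, y)) = Fin.snoc y t := by
          rw [MeasurableEquiv.piFinSuccAbove_symm_apply]
          simp [Fin.insertNthEquiv]
        rw [he]
        rw [show Fin.append x (Fin.snoc y t : Fin (k+1) → ℝ)
            = (Fin.snoc (Fin.append x y) t : Fin ((n+k)+1) → ℝ) from Fin.append_snoc x y t]
        exact det_snoc_eq_cons (Fin.append x y) t
      calc ∫ (y : Fin k → ℝ), (∫ (t : ℝ),
            Matrix.det (Matrix.of fun i j : Fin (n+(k+1)) => cdKernel w p N
              (Fin.append x ((MeasurableEquiv.piFinSuccAbove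
                (fun _ : Fin (k+1) => ℝ) (Fin.last k)).symm (t, y)) i)
              (Fin.append x ((MeasurableEquiv.piFinSuccAbove
                (fun _ : Fin (k+1) => ℝ) (Fin.last k)).symm (t, y)) j)) ∂μ)
            ∂(Measure.pi fun _ : Fin k => μ)
          = ∫ (y : Fin k → ℝ), ((N : ℝ) - (n + k)) *
              Matrix.det (Matrix.of fun i j : Fin (n+k) =>
                cdKernel w p N (Fin.append x y i) (Fin.append x y j))
              ∂(Measure.pi fun _ : Fin k => μ) := by
            refine integral_congr_ae (Filter.Eventually.of_forall fun y => ?_)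
            dsimp only
            rw [show (fun t : ℝ =>
                Matrix.det (Matrix.of fun i j : Fin (n+(k+1)) => cdKernel w p N
                  (Fin.append x ((MeasurableEquiv.piFinSuccAbove
                    (fun _ : Fin (k+1) => ℝ) (Fin.last k)).symm (t, y)) i)
                  (Fin.append x ((MeasurableEquiv.piFinSuccAbove
                    (fun _ : Fin (k+1) => ℝ) (Fin.last k)).symm (t, y)) j)))
              = fun t : ℝ => Matrix.det (Matrix.of fun i j : Fin ((n+k)+1) => cdKernel w p N
                  ((Fin.cons t (Fin.append x y) : Fin ((n+k)+1) → ℝ) i)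
                  ((Fin.cons t (Fin.append x y) : Fin ((n+k)+1) → ℝ) j))
              from funext fun t => hfun y t]
            rw [step hw hwmeas hmom horth (Fin.append x y)]
            push_cast
            ring_nf
        _ = _ := by
            rw [integral_const_mul, ih, Finset.prod_range_succ]
            push_cast
            ring

lemma iter0 [SigmaFinite μ] (hw : ∀ x, 0 ≤ w x) (hwmeas : Measurable w)
    (hmom : ∀ k : ℕ, Integrable (fun x => |x| ^ k * w x) μ)
    (horth : ∀ j k, (∫ x, (p j).eval x * (p k).eval x * w x ∂μ) =
      if j = k then (1 : ℝ) else 0) : ∀ k : ℕ,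
    (∫ z : Fin k → ℝ, Matrix.det (Matrix.of fun i j : Fin k =>
      cdKernel w p N (z i) (z j)) ∂(Measure.pi fun _ => μ))
    = ∏ s ∈ range k, ((N:ℝ) - s) := by
  intro k
  induction k with
  | zero =>
      rw [show (fun z : Fin 0 → ℝ => Matrix.det (Matrix.of fun i j : Fin 0 =>
          cdKernel w p N (z i) (z j))) = fun _ : Fin 0 → ℝ => (1:ℝ) from
        funext fun z => Matrix.det_fin_zero]
      rw [integral_const]
      simp [Measure.real, Measure.pi_empty_univ]
  | succ k ih =>
      have mp := (measurePreserving_piFinSuccAbove (fun _ : Fin (k+1) => μ) (Fin.last k)).symm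
      rw [← mp.integral_comp']
      have hInt : Integrable (fun q : ℝ × (Fin k → ℝ) =>
          Matrix.det (Matrix.of fun i j : Fin (k+1) => cdKernel w p N
            (((MeasurableEquiv.piFinSuccAbove
              (fun _ : Fin (k+1) => ℝ) (Fin.last k)).symm q) i)
            (((MeasurableEquiv.piFinSuccAbove
              (fun _ : Fin (k+1) => ℝ) (Fin.last k)).symm q) j)))
          (μ.prod (Measure.pi fun _ => μ)) :=
        (mp.integrable_comp_emb (MeasurableEquiv.measurableEmbedding _)).mpr
          (integrable_det_pi hw hwmeas hmom)
      rw [integral_prod _ hInt, integral_integral_swap hInt]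
      have hfun : ∀ (y : Fin k → ℝ) (t : ℝ),
          Matrix.det (Matrix.of fun i j : Fin (k+1) => cdKernel w p N
            (((MeasurableEquiv.piFinSuccAbove
              (fun _ : Fin (k+1) => ℝ) (Fin.last k)).symm (t, y)) i)
            (((MeasurableEquiv.piFinSuccAbove
              (fun _ : Fin (k+1) => ℝ) (Fin.last k)).symm (t, y)) j))
          = Matrix.det (Matrix.of fun i j : Fin (k+1) => cdKernel w p N
            ((Fin.cons t y : Fin (k+1) → ℝ) i) ((Fin.cons t y : Fin (k+1) → ℝ) j)) := by
        intro y t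
        have he : ((MeasurableEquiv.piFinSuccAbove
            (fun _ : Fin (k+1) => ℝ) (Fin.last k)).symm (t, y)) = Fin.snoc y t := by
          rw [MeasurableEquiv.piFinSuccAbove_symm_apply]
          simp [Fin.insertNthEquiv]
        rw [he]
        exact det_snoc_eq_cons y t
      calc ∫ (y : Fin k → ℝ), (∫ (t : ℝ),
            Matrix.det (Matrix.of fun i j : Fin (k+1) => cdKernel w p N
              (((MeasurableEquiv.piFinSuccAbove
                (fun _ : Fin (k+1) => ℝ) (Fin.last k)).symm (t, y)) i)
              (((MeasurableEquiv.piFinSuccAbove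
                (fun _ : Fin (k+1) => ℝ) (Fin.last k)).symm (t, y)) j)) ∂μ)
            ∂(Measure.pi fun _ : Fin k => μ)
          = ∫ (y : Fin k → ℝ), ((N : ℝ) - k) *
              Matrix.det (Matrix.of fun i j : Fin k =>
                cdKernel w p N (y i) (y j)) ∂(Measure.pi fun _ : Fin k => μ) := by
            refine integral_congr_ae (Filter.Eventually.of_forall fun y => ?_)
            dsimp only
            rw [show (fun t : ℝ =>
                Matrix.det (Matrix.of fun i j : Fin (k+1) => cdKernel w p N
                  (((MeasurableEquiv.piFinSuccAbove
                    (fun _ : Fin (k+1) => ℝ) (Fin.last k)).symm (t, y)) i)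
                  (((MeasurableEquiv.piFinSuccAbove
                    (fun _ : Fin (k+1) => ℝ) (Fin.last k)).symm (t, y)) j)))
              = fun t : ℝ => Matrix.det (Matrix.of fun i j : Fin (k+1) => cdKernel w p N
                  ((Fin.cons t y : Fin (k+1) → ℝ) i) ((Fin.cons t y : Fin (k+1) → ℝ) j))
              from funext fun t => hfun y t]
            rw [step hw hwmeas hmom horth y]
        _ = _ := by
            rw [integral_const_mul, ih, Finset.prod_range_succ]
            ring

lemma vand_eq (hw : ∀ x, 0 ≤ w x) (hdeg : ∀ k, (p k).natDegree = k)
    (hlead : ∀ k, 0 < (p k).leadingCoeff) (n : ℕ) (z : Fin n → ℝ) :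
    Matrix.det (Matrix.of fun i j : Fin n => cdKernel w p n (z i) (z j))
    = (∏ k : Fin n, (p (k : ℕ)).leadingCoeff) ^ 2 *
      ((∏ i : Fin n, ∏ j ∈ Finset.Ioi i, (z i - z j) ^ 2) * ∏ j, w (z j)) := by
  classical
  set V : Matrix (Fin n) (Fin n) ℝ :=
    Matrix.of fun i k : Fin n => Real.sqrt (w (z i)) * (p (k : ℕ)).eval (z i) with hV
  have hKV : (Matrix.of fun i j : Fin n => cdKernel w p n (z i) (z j)) = V * V.transpose := by
    ext i j
    rw [Matrix.mul_apply, Matrix.of_apply]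
    unfold cdKernel
    rw [Real.sqrt_mul (hw (z i)), ← Fin.sum_univ_eq_sum_range
      (fun k => (p k).eval (z i) * (p k).eval (z j)) n, Finset.sum_mul]
    refine Finset.sum_congr rfl fun k _ => ?_
    rw [hV]
    simp only [Matrix.transpose_apply, Matrix.of_apply]
    ring
  -- the matrix of leading coefficients
  set q : Fin n → Polynomial ℝ :=
    fun k => Polynomial.C ((p (k : ℕ)).leadingCoeff)⁻¹ * p (k : ℕ) with hq
  have hlc : ∀ k : Fin n, ((p (k : ℕ)).leadingCoeff)⁻¹ ≠ 0 :=
    fun k => inv_ne_zero (ne_of_gt (hlead k))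
  have hqdeg : ∀ k : Fin n, (q k).natDegree = (k : ℕ) := by
    intro k
    rw [hq]
    rw [Polynomial.natDegree_C_mul (hlc k), hdeg]
  have hqmonic : ∀ k : Fin n, (q k).Monic := by
    intro k
    have : (q k).leadingCoeff = 1 := by
      rw [hq]
      simp only []
      rw [Polynomial.leadingCoeff_mul, Polynomial.leadingCoeff_C]
      exact inv_mul_cancel₀ (ne_of_gt (hlead k))
    exact this
  have hdetV : V.det = (∏ i, Real.sqrt (w (z i))) *
      ((∏ k : Fin n, (p (k : ℕ)).leadingCoeff) * (Matrix.vandermonde z).det) := by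
    have h1 : V.det = (∏ i, Real.sqrt (w (z i))) *
        Matrix.det (Matrix.of fun i k : Fin n => (p (k : ℕ)).eval (z i)) := by
      rw [hV]
      exact Matrix.det_mul_column (fun i : Fin n => Real.sqrt (w (z i))) _
    have h2 : Matrix.det (Matrix.of fun i k : Fin n => (p (k : ℕ)).eval (z i))
        = (∏ k : Fin n, (p (k : ℕ)).leadingCoeff) *
          Matrix.det (Matrix.of fun i k : Fin n => (q k).eval (z i)) := by
      rw [show (Matrix.of fun i k : Fin n => (p (k : ℕ)).eval (z i))
          = Matrix.of fun i k : Fin n =>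
            (p (k : ℕ)).leadingCoeff * (q k).eval (z i) by
        ext i k
        rw [Matrix.of_apply, Matrix.of_apply, hq]
        simp only [Polynomial.eval_mul, Polynomial.eval_C]
        rw [← mul_assoc, mul_inv_cancel₀ (ne_of_gt (hlead k)), one_mul]]
      exact Matrix.det_mul_row (fun k : Fin n => (p (k : ℕ)).leadingCoeff) _
    have h3 : Matrix.det (Matrix.of fun i k : Fin n => (q k).eval (z i))
        = (Matrix.vandermonde z).det :=
      (Matrix.det_eval_matrixOfPolynomials_eq_det_vandermonde z q hqdeg hqmonic).symm
    rw [h1, h2, h3]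
  rw [hKV, Matrix.det_mul, Matrix.det_transpose, ← sq, hdetV]
  rw [Matrix.det_vandermonde]
  rw [mul_pow, mul_pow]
  simp only [← Finset.prod_pow]
  have hsq : (∏ i : Fin n, Real.sqrt (w (z i)) ^ 2) = ∏ i, w (z i) :=
    Finset.prod_congr rfl fun i _ => Real.sq_sqrt (hw (z i))
  have hflip : (∏ i : Fin n, ∏ j ∈ Finset.Ioi i, (z j - z i) ^ 2)
      = ∏ i : Fin n, ∏ j ∈ Finset.Ioi i, (z i - z j) ^ 2 :=
    Finset.prod_congr rfl fun i _ => Finset.prod_congr rfl fun j _ => by ring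
  rw [hsq, hflip]
  ring

lemma prod_range_add_one (n : ℕ) : (∏ x ∈ range n, ((x:ℝ) + 1)) = n.factorial := by
  induction n with
  | zero => simp
  | succ n ih => rw [Finset.prod_range_succ, ih]; push_cast [Nat.factorial_succ]; ring

lemma prod_range_cast_factorial (n : ℕ) : (∏ s ∈ range n, ((n:ℝ) - s)) = n.factorial := by
  rw [← Finset.prod_range_reflect]
  have : ∀ j ∈ range n, ((n:ℝ) - (n - 1 - j : ℕ)) = (j:ℝ) + 1 := by
    intro j hj
    have hj' : j < n := Finset.mem_range.mp hj
    have h1 : n - 1 - j = n - (j+1) := by omega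
    rw [h1, Nat.cast_sub hj']
    push_cast
    ring
  rw [Finset.prod_congr rfl this, prod_range_add_one]


end OPEAux

/-- The orthogonal polynomial ensemble density
`u_N(x) = Z⁻¹ ∏_{i<j} (x_i - x_j)² ∏_j w(x_j)`. -/
noncomputable def opeDensity (w : ℝ → ℝ) (Z : ℝ) (N : ℕ) (x : Fin N → ℝ) : ℝ :=
  Z⁻¹ * (∏ i : Fin N, ∏ j ∈ Finset.Ioi i, (x i - x j) ^ 2) * ∏ j, w (x j)

/-- Determinantal correlation functions of orthogonal polynomial ensembles: with
`N = m + r`,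
`(N!/(N-m)!) ∫ u_N(x₁,…,x_m,y₁,…,y_r) dμ(y₁)⋯dμ(y_r) = det(K_N(x_i,x_j))_{i,j≤m}`. -/
theorem ope_correlation_functions
    (μ : Measure ℝ) [SigmaFinite μ] (w : ℝ → ℝ) (hw : ∀ x, 0 ≤ w x)
    (hwmeas : Measurable w)
    (hmom : ∀ k : ℕ, Integrable (fun x => |x| ^ k * w x) μ)
    (p : ℕ → Polynomial ℝ)
    (hdeg : ∀ k, (p k).natDegree = k) (hlead : ∀ k, 0 < (p k).leadingCoeff)
    (horth : ∀ j k, (∫ x, (p j).eval x * (p k).eval x * w x ∂μ) =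
      if j = k then (1 : ℝ) else 0)
    (m r : ℕ) (hm : 1 ≤ m) (Z : ℝ) (hZ0 : Z ≠ 0)
    (hZ : Z = ∫ x : Fin (m + r) → ℝ,
      (∏ i : Fin (m + r), ∏ j ∈ Finset.Ioi i, (x i - x j) ^ 2) * ∏ j, w (x j)
      ∂Measure.pi fun _ => μ)
    (x : Fin m → ℝ) :
    ((Nat.factorial (m + r) : ℝ) / Nat.factorial r) *
        (∫ y : Fin r → ℝ, opeDensity w Z (m + r) (Fin.append x y)
          ∂Measure.pi fun _ => μ) =
      Matrix.det fun i j : Fin m => cdKernel w p (m + r) (x i) (x j) := by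
  classical
  set N := m + r with hN
  set cκ : ℝ := ∏ k : Fin N, (p (k : ℕ)).leadingCoeff with hcκ
  have hcκpos : 0 < cκ := Finset.prod_pos fun k _ => hlead _
  have hpoint : ∀ z : Fin N → ℝ,
      (∏ i : Fin N, ∏ j ∈ Finset.Ioi i, (z i - z j) ^ 2) * ∏ j, w (z j)
      = (cκ ^ 2)⁻¹ *
        Matrix.det (Matrix.of fun i j : Fin N => cdKernel w p N (z i) (z j)) := by
    intro z
    rw [OPEAux.vand_eq hw hdeg hlead N z, hcκ]
    field_simp
    exact (mul_div_cancel_right₀ _ (ne_of_gt hcκpos)).symm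
  have hfacN : (((N:ℕ).factorial : ℝ)) ≠ 0 := Nat.cast_ne_zero.mpr (Nat.factorial_ne_zero N)
  have hfacr : ((r.factorial : ℝ)) ≠ 0 := Nat.cast_ne_zero.mpr (Nat.factorial_ne_zero r)
  have hcκ2 : cκ ^ 2 ≠ 0 := pow_ne_zero 2 (ne_of_gt hcκpos)
  have hZ' : Z = (cκ ^ 2)⁻¹ * ((N).factorial : ℝ) := by
    rw [hZ]
    rw [show (fun z : Fin N → ℝ =>
        (∏ i : Fin N, ∏ j ∈ Finset.Ioi i, (z i - z j) ^ 2) * ∏ j, w (z j))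
      = fun z : Fin N → ℝ => (cκ ^ 2)⁻¹ *
          Matrix.det (Matrix.of fun i j : Fin N => cdKernel w p N (z i) (z j))
      from funext hpoint]
    rw [integral_const_mul, OPEAux.iter0 hw hwmeas hmom horth N,
      OPEAux.prod_range_cast_factorial]
  have hint : (∫ y : Fin r → ℝ, opeDensity w Z N (Fin.append x y)
        ∂Measure.pi fun _ => μ)
      = Z⁻¹ * (cκ ^ 2)⁻¹ * ((r.factorial : ℝ) *
          Matrix.det (Matrix.of fun i j : Fin m => cdKernel w p N (x i) (x j))) := by
    have hfun : (fun y : Fin r → ℝ => opeDensity w Z N (Fin.append x y)) =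
        fun y : Fin r → ℝ => (Z⁻¹ * (cκ ^ 2)⁻¹) *
          Matrix.det (Matrix.of fun i j : Fin N =>
            cdKernel w p N (Fin.append x y i) (Fin.append x y j)) := by
      funext y
      rw [opeDensity, mul_assoc, hpoint (Fin.append x y), mul_assoc]
    rw [hfun, integral_const_mul, OPEAux.iter hw hwmeas hmom horth x r]
    have hprod : (∏ s ∈ Finset.range r, (((N:ℕ):ℝ) - ((m:ℕ) + (s:ℕ)))) = r.factorial := by
      have h1 : ∀ s ∈ Finset.range r, (((N:ℕ):ℝ) - ((m:ℕ) + (s:ℕ))) = ((r:ℝ) - (s:ℕ)) := by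
        intro s _
        rw [hN]
        push_cast
        ring
      rw [Finset.prod_congr rfl h1]
      have h2 : ∀ s ∈ Finset.range r, ((r:ℝ) - (s:ℕ)) = ((r:ℝ) - s) := fun s _ => rfl
      rw [Finset.prod_congr rfl h2, OPEAux.prod_range_cast_factorial]
    rw [hprod]
  show ((N.factorial : ℝ) / r.factorial) * _
      = Matrix.det (Matrix.of fun i j : Fin m => cdKernel w p N (x i) (x j))
  rw [hint, hZ']
  rw [mul_inv, inv_inv]
  field_simp
end
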